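/- arXiv:1709.00853 — 8 statements merged into one kernel-verified Lean document; each statement's English description precedes it below -/
import Mathlib

section
/- Let A(p) = A⁰ + Σ_{k=1}^K p_k·Aᵏ be a parametric interval matrix with affine-linear dependencies, with parameter box p ∈ ∏_k [p̌_k − Δ_k, p̌_k + Δ_k], and suppose the midpoint matrix A(p̌) is nonsingular. Let B = Σ_{k=1}^K Δ_k·|Aᵏ|, where |M| denotes the entrywise absolute value of a matrix. If the spectral radius ρ(|A(p̌)⁻¹|·B) < 1, then A(p) is nonsingular for every p in the parameter box (i.e., the parametric interval matrix is regular). -/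
open Matrix Filter Topology
open scoped ENNReal NNReal

/-- Entrywise absolute value of a real matrix. -/
def mAbs {n : ℕ} (M : Matrix (Fin n) (Fin n) ℝ) : Matrix (Fin n) (Fin n) ℝ :=
  Matrix.of fun i j => |M i j|

/-- Spectral radius of a real matrix: the largest modulus of a (complex) eigenvalue. -/
noncomputable def specRad {n : ℕ} (M : Matrix (Fin n) (Fin n) ℝ) : ℝ :=
  sSup {r : ℝ | ∃ μ : ℂ, μ ∈ spectrum ℂ (M.map Complex.ofReal) ∧ r = ‖μ‖}

section Aux

attribute [local instance] Matrix.linftyOpNormedAddCommGroup Matrix.linftyOpNormedRing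
  Matrix.linftyOpNormedAlgebra

lemma aux_norm_pow_tendsto {n : ℕ} [Nonempty (Fin n)] (Mc : Matrix (Fin n) (Fin n) ℂ)
    (h : spectralRadius ℂ Mc < 1) :
    Tendsto (fun t : ℕ => ‖Mc ^ t‖) atTop (𝓝 0) := by
  obtain ⟨c, hc1, hc2⟩ := ENNReal.lt_iff_exists_nnreal_btwn.mp h
  have hgel := spectrum.pow_nnnorm_pow_one_div_tendsto_nhds_spectralRadius Mc
  have hev : ∀ᶠ t : ℕ in atTop, (‖Mc ^ t‖₊ : ℝ≥0∞) ^ (1 / (t : ℝ)) < (c : ℝ≥0∞) :=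
    hgel.eventually_lt_const hc1
  have hc1' : (c : ℝ) < 1 := by exact_mod_cast hc2
  have hbd : ∀ᶠ t : ℕ in atTop, ‖Mc ^ t‖ ≤ (c : ℝ) ^ t := by
    filter_upwards [hev, eventually_ge_atTop 1] with t ht ht1
    have ht0 : (t : ℝ) ≠ 0 := by positivity
    have h2 : (((‖Mc ^ t‖₊ : ℝ≥0∞) ^ (1 / (t : ℝ))) ^ (t : ℝ)) ≤ (c : ℝ≥0∞) ^ (t : ℝ) :=
      ENNReal.rpow_le_rpow ht.le (by positivity)
    rw [← ENNReal.rpow_mul, one_div, inv_mul_cancel₀ ht0, ENNReal.rpow_one,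
      ENNReal.rpow_natCast] at h2
    have h3 : (‖Mc ^ t‖₊ : ℝ≥0∞) ≤ ((c ^ t : ℝ≥0) : ℝ≥0∞) := by
      rwa [ENNReal.coe_pow]
    have := ENNReal.coe_le_coe.mp h3
    exact_mod_cast this
  have hlim : Tendsto (fun t : ℕ => (c : ℝ) ^ t) atTop (𝓝 0) :=
    tendsto_pow_atTop_nhds_zero_of_lt_one c.coe_nonneg hc1'
  exact squeeze_zero' (Eventually.of_forall fun t => norm_nonneg _) hbd hlim

/-- spectral radius conversion -/
lemma aux_specRad_lt_one {n : ℕ} [Nonempty (Fin n)] (M : Matrix (Fin n) (Fin n) ℝ)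
    (h : specRad M < 1) : spectralRadius ℂ (M.map Complex.ofReal) < 1 := by
  set Mc := M.map Complex.ofReal
  have hbdd : BddAbove {r : ℝ | ∃ μ : ℂ, μ ∈ spectrum ℂ Mc ∧ r = ‖μ‖} := by
    refine ⟨‖Mc‖, ?_⟩
    rintro r ⟨μ, hμ, rfl⟩
    exact spectrum.norm_le_norm_of_mem hμ
  have hle : spectralRadius ℂ Mc ≤ ENNReal.ofReal (specRad M) := by
    rw [spectralRadius]
    refine iSup₂_le fun μ hμ => ?_
    rw [← ENNReal.ofReal_coe_nnreal, coe_nnnorm]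
    refine ENNReal.ofReal_le_ofReal ?_
    exact le_csSup hbdd ⟨μ, hμ, rfl⟩
  exact lt_of_le_of_lt hle (ENNReal.ofReal_lt_one.mpr h)

/-- key: if there is a nonzero nonnegative vector y with y ≤ M y then contradiction -/
lemma aux_no_fixed_vec {n : ℕ} [Nonempty (Fin n)] (M : Matrix (Fin n) (Fin n) ℝ)
    (hM : ∀ i j, 0 ≤ M i j) (hρ : specRad M < 1)
    (y : Fin n → ℝ) (hy0 : ∀ i, 0 ≤ y i) (hy : ∀ i, y i ≤ (M *ᵥ y) i) :
    ∀ i, y i = 0 := by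
  have mono : ∀ (u v : Fin n → ℝ), (∀ i, u i ≤ v i) → ∀ i, (M *ᵥ u) i ≤ (M *ᵥ v) i := by
    intro u v huv i
    simp only [Matrix.mulVec, dotProduct]
    exact Finset.sum_le_sum fun j _ => mul_le_mul_of_nonneg_left (huv j) (hM i j)
  have hiter : ∀ t : ℕ, ∀ i, y i ≤ ((M ^ t) *ᵥ y) i := by
    intro t
    induction t with
    | zero => intro i; simp
    | succ t ih =>
      intro i
      calc y i ≤ (M *ᵥ y) i := hy i
        _ ≤ (M *ᵥ ((M ^ t) *ᵥ y)) i := mono _ _ ih i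
        _ = ((M ^ (t + 1)) *ᵥ y) i := by rw [Matrix.mulVec_mulVec, ← pow_succ']
  set Mc := M.map Complex.ofReal with hMc
  set yc : Fin n → ℂ := fun i => (y i : ℂ) with hyc
  have hpow : ∀ t : ℕ, Mc ^ t = (M ^ t).map Complex.ofReal := by
    intro t
    have := map_pow ((Complex.ofRealHom.mapMatrix : Matrix (Fin n) (Fin n) ℝ →+* _)) M t
    simp only [RingHom.mapMatrix_apply] at this
    exact this.symm
  have hentry : ∀ t i, ((M ^ t) *ᵥ y) i ≤ ‖Mc ^ t‖ * ‖yc‖ := by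
    intro t i
    have h1 : ((Mc ^ t) *ᵥ yc) i = (((M ^ t) *ᵥ y) i : ℂ) := by
      rw [hpow]
      simp [Matrix.mulVec, dotProduct, Matrix.map_apply, hyc]
    have h2 : ‖((Mc ^ t) *ᵥ yc) i‖ ≤ ‖(Mc ^ t) *ᵥ yc‖ := norm_le_pi_norm _ i
    rw [h1, Complex.norm_real] at h2
    calc ((M ^ t) *ᵥ y) i ≤ |((M ^ t) *ᵥ y) i| := le_abs_self _
      _ ≤ ‖(Mc ^ t) *ᵥ yc‖ := h2
      _ ≤ ‖Mc ^ t‖ * ‖yc‖ := Matrix.linfty_opNorm_mulVec _ _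
  have hlim : Tendsto (fun t : ℕ => ‖Mc ^ t‖ * ‖yc‖) atTop (𝓝 0) := by
    have := (aux_norm_pow_tendsto Mc (aux_specRad_lt_one M hρ)).mul_const ‖yc‖
    simpa using this
  intro i
  have hyi : y i ≤ 0 :=
    ge_of_tendsto' hlim fun t => (hiter t i).trans (hentry t i)
  exact le_antisymm hyi (hy0 i)

end Aux

/-- If the midpoint matrix `A(p̌)` is nonsingular and `ρ(|A(p̌)⁻¹|·B) < 1` with
`B = ∑ Δₖ·|Aᵏ|`, then the parametric interval matrix `A(p) = A⁰ + ∑ pₖ·Aᵏ` is regular,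
i.e. `A(p)` is nonsingular for every `p` in the parameter box. -/
theorem stmt_0 {n K : ℕ}
    (A0 : Matrix (Fin n) (Fin n) ℝ) (A : Fin K → Matrix (Fin n) (Fin n) ℝ)
    (pc Δ : Fin K → ℝ) (hΔ : ∀ k, 0 ≤ Δ k)
    (Amid : Matrix (Fin n) (Fin n) ℝ) (hAmid : Amid = A0 + ∑ k, pc k • A k)
    (B : Matrix (Fin n) (Fin n) ℝ) (hB : B = ∑ k, Δ k • mAbs (A k))
    (hmid : IsUnit Amid.det)
    (hρ : specRad (mAbs Amid⁻¹ * B) < 1) :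
    ∀ p : Fin K → ℝ, (∀ k, pc k - Δ k ≤ p k ∧ p k ≤ pc k + Δ k) →
      IsUnit (A0 + ∑ k, p k • A k).det := by
  intro p hp
  rcases isEmpty_or_nonempty (Fin n) with hn | hn
  · simp [Matrix.det_isEmpty]
  by_contra hdet
  have hdet0 : (A0 + ∑ k, p k • A k).det = 0 := by
    by_contra h0
    exact hdet (isUnit_iff_ne_zero.mpr h0)
  obtain ⟨x, hx0, hx⟩ := (Matrix.exists_mulVec_eq_zero_iff).mpr hdet0
  set D : Matrix (Fin n) (Fin n) ℝ := ∑ k, (p k - pc k) • A k with hD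
  have hsplit : A0 + ∑ k, p k • A k = Amid + D := by
    rw [hAmid, hD]
    simp only [sub_smul, Finset.sum_sub_distrib]
    abel
  -- x = -(Amid⁻¹ *ᵥ (D *ᵥ x))
  have hAx : Amid *ᵥ x = -(D *ᵥ x) := by
    rw [hsplit, Matrix.add_mulVec] at hx
    linear_combination (norm := module) hx
  have hxeq : x = -(Amid⁻¹ *ᵥ (D *ᵥ x)) := by
    have h1 : Amid⁻¹ *ᵥ (Amid *ᵥ x) = x := by
      rw [Matrix.mulVec_mulVec, Matrix.nonsing_inv_mul _ hmid, Matrix.one_mulVec]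
    conv_lhs => rw [← h1]
    rw [hAx, Matrix.mulVec_neg]
  -- entrywise bound on D
  have hDB : ∀ i j, |D i j| ≤ B i j := by
    intro i j
    rw [hD, hB]
    simp only [Matrix.sum_apply, Matrix.smul_apply, smul_eq_mul]
    refine (Finset.abs_sum_le_sum_abs _ _).trans (Finset.sum_le_sum fun k _ => ?_)
    rw [abs_mul]
    have hpk : |p k - pc k| ≤ Δ k := abs_le.mpr ⟨by linarith [(hp k).1], by linarith [(hp k).2]⟩
    have : |A k i j| = mAbs (A k) i j := rfl
    rw [this]
    exact mul_le_mul_of_nonneg_right hpk (by rw [← this]; positivity) |>.trans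
      (le_of_eq rfl)
  set y : Fin n → ℝ := fun i => |x i| with hy
  set M : Matrix (Fin n) (Fin n) ℝ := mAbs Amid⁻¹ * B with hM
  have hBpos : ∀ i j, 0 ≤ B i j := fun i j => le_trans (abs_nonneg _) (hDB i j)
  have hMpos : ∀ i j, 0 ≤ M i j := by
    intro i j
    rw [hM]
    simp only [Matrix.mul_apply]
    exact Finset.sum_nonneg fun l _ => mul_nonneg (abs_nonneg _) (hBpos l j)
  have hkey : ∀ i, y i ≤ (M *ᵥ y) i := by
    intro i
    have h1 : y i = |(Amid⁻¹ *ᵥ (D *ᵥ x)) i| := by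
      rw [hy]; conv_lhs => rw [hxeq]
      simp [abs_neg]
    have h2 : |(Amid⁻¹ *ᵥ (D *ᵥ x)) i| ≤ ∑ j, |Amid⁻¹ i j| * |(D *ᵥ x) j| := by
      simp only [Matrix.mulVec, dotProduct]
      refine (Finset.abs_sum_le_sum_abs _ _).trans (Finset.sum_le_sum fun j _ => ?_)
      rw [abs_mul]
    have h3 : ∀ j, |(D *ᵥ x) j| ≤ (B *ᵥ y) j := by
      intro j
      simp only [Matrix.mulVec, dotProduct]
      refine (Finset.abs_sum_le_sum_abs _ _).trans (Finset.sum_le_sum fun l _ => ?_)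
      rw [abs_mul]
      exact mul_le_mul_of_nonneg_right (hDB j l) (abs_nonneg _)
    have h4 : ∑ j, |Amid⁻¹ i j| * |(D *ᵥ x) j| ≤ ∑ j, |Amid⁻¹ i j| * (B *ᵥ y) j :=
      Finset.sum_le_sum fun j _ => mul_le_mul_of_nonneg_left (h3 j) (abs_nonneg _)
    have h5 : ∑ j, |Amid⁻¹ i j| * (B *ᵥ y) j = (M *ᵥ y) i := by
      rw [hM, ← Matrix.mulVec_mulVec]
      simp only [Matrix.mulVec, dotProduct, mAbs, Matrix.of_apply]
    calc y i = |(Amid⁻¹ *ᵥ (D *ᵥ x)) i| := h1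
      _ ≤ ∑ j, |Amid⁻¹ i j| * |(D *ᵥ x) j| := h2
      _ ≤ ∑ j, |Amid⁻¹ i j| * (B *ᵥ y) j := h4
      _ = (M *ᵥ y) i := h5
  have := aux_no_fixed_vec M hMpos hρ y (fun i => abs_nonneg _) hkey
  exact hx0 (funext fun i => abs_eq_zero.mp (this i))
end

section
/- Let A(p) = A⁰ + Σ_{k=1}^K p_k·Aᵏ be a symmetric parametric interval matrix with affine-linear dependencies over the parameter box ∏_k [p̲_k, p̄_k]. Then A(p) is stable for every p in the parameter box if and only if A(p) is stable for every vertex p of the box, i.e., for every p with p_k ∈ {p̲_k, p̄_k} for all k. -/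
open Matrix

/-- For a real symmetric matrix, all elements of the real spectrum are negative iff the
quadratic form is negative on nonzero vectors. -/
lemma spec_neg_iff_qf_neg {n : ℕ} {M : Matrix (Fin n) (Fin n) ℝ} (hM : M.IsHermitian) :
    (∀ μ ∈ spectrum ℝ M, μ < 0) ↔ ∀ x : Fin n → ℝ, x ≠ 0 → x ⬝ᵥ (M *ᵥ x) < 0 := by
  constructor
  · intro hspec x hx
    set V : Matrix (Fin n) (Fin n) ℝ := (hM.eigenvectorUnitary : Matrix (Fin n) (Fin n) ℝ)
    have hspecth := hM.spectral_theorem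
    set y : Fin n → ℝ := star V *ᵥ x with hy
    have hxy : V *ᵥ y = x := by
      rw [hy, mulVec_mulVec, (Unitary.mem_iff.mp hM.eigenvectorUnitary.2).2, one_mulVec]
    have hy0 : y ≠ 0 := by
      intro h
      apply hx
      rw [← hxy, h, mulVec_zero]
    have key : x ⬝ᵥ (M *ᵥ x) = ∑ i, hM.eigenvalues i * (y i)^2 := by
      conv_lhs => rw [hspecth]
      rw [Unitary.conjStarAlgAut_apply]
      rw [← mulVec_mulVec, ← mulVec_mulVec, dotProduct_mulVec]
      have hvm : x ᵥ* V = y := by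
        have : star V = Vᵀ := by
          ext i j
          simp [conjTranspose_apply]
        rw [hy, this, ← vecMul_transpose, transpose_transpose]
      rw [hvm]
      simp only [dotProduct, mulVec_diagonal, Function.comp_apply, RCLike.ofReal_real_eq_id,
        id_eq]
      apply Finset.sum_congr rfl
      intro i _
      ring
    rw [key]
    obtain ⟨i, hi⟩ : ∃ i, y i ≠ 0 := by
      by_contra h
      push_neg at h
      exact hy0 (funext h)
    have hneg : ∀ j, hM.eigenvalues j < 0 := fun j =>
      hspec _ (hM.eigenvalues_mem_spectrum_real j)
    have : ∀ j ∈ Finset.univ, hM.eigenvalues j * (y j)^2 ≤ 0 := fun j _ =>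
      mul_nonpos_of_nonpos_of_nonneg (hneg j).le (sq_nonneg _)
    calc ∑ i, hM.eigenvalues i * (y i)^2 < ∑ _i : Fin n, (0:ℝ) := by
          apply Finset.sum_lt_sum this
          exact ⟨i, Finset.mem_univ i, mul_neg_of_neg_of_pos (hneg i)
            (by positivity)⟩
      _ = 0 := by simp
  · intro hqf μ hμ
    rw [← AlgEquiv.spectrum_eq (Matrix.toLinAlgEquiv' (R := ℝ) (n := Fin n)),
      ← Module.End.hasEigenvalue_iff_mem_spectrum] at hμ
    obtain ⟨x, hx⟩ := hμ.exists_hasEigenvector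
    have hx0 : x ≠ 0 := hx.right
    have hMx : M *ᵥ x = μ • x := by
      have := hx.apply_eq_smul
      simpa [Matrix.toLinAlgEquiv'_apply] using this
    have hq := hqf x hx0
    rw [hMx, dotProduct_smul, smul_eq_mul] at hq
    have hxx : 0 < x ⬝ᵥ x := by
      have h0 : 0 ≤ x ⬝ᵥ x := Finset.sum_nonneg fun i _ => mul_self_nonneg _
      rcases h0.lt_or_eq with h | h
      · exact h
      · exfalso
        apply hx0
        funext i
        have := Finset.sum_eq_zero_iff_of_nonneg
          (fun j (_ : j ∈ Finset.univ) => mul_self_nonneg (x j)) |>.mp h.symm i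
          (Finset.mem_univ i)
        exact mul_self_eq_zero.mp this
    nlinarith

/-- A symmetric parametric interval matrix `A(p) = A⁰ + ∑ pₖ·Aᵏ` is stable (all eigenvalues
strictly negative) for every `p` in the parameter box `∏ₖ [p̲ₖ, p̄ₖ]` if and only if it is
stable at every vertex of the box (vertex property). -/
theorem stmt_2 {n K : ℕ}
    (A0 : Matrix (Fin n) (Fin n) ℝ) (A : Fin K → Matrix (Fin n) (Fin n) ℝ)
    (hA0 : A0.IsSymm) (hA : ∀ k, (A k).IsSymm)
    (plo phi : Fin K → ℝ) (hbox : ∀ k, plo k ≤ phi k) :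
    (∀ p : Fin K → ℝ, (∀ k, plo k ≤ p k ∧ p k ≤ phi k) →
        ∀ μ ∈ spectrum ℝ (A0 + ∑ k, p k • A k), μ < 0) ↔
    (∀ p : Fin K → ℝ, (∀ k, p k = plo k ∨ p k = phi k) →
        ∀ μ ∈ spectrum ℝ (A0 + ∑ k, p k • A k), μ < 0) := by
  have herm : ∀ p : Fin K → ℝ, (A0 + ∑ k, p k • A k).IsHermitian := by
    intro p
    have hs : (A0 + ∑ k, p k • A k).IsSymm := by
      refine Matrix.IsSymm.add hA0 ?_
      rw [Matrix.IsSymm, Matrix.transpose_sum]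
      exact Finset.sum_congr rfl fun k _ => ((hA k).smul (p k))
    rw [Matrix.IsHermitian, conjTranspose_eq_transpose_of_trivial]
    exact hs
  constructor
  · intro h p hp
    exact h p fun k => by rcases hp k with h' | h' <;> simp [h', hbox k]
  · intro h p hp
    rw [spec_neg_iff_qf_neg (herm p)]
    intro x hx
    -- quadratic form coefficients
    set c : Fin K → ℝ := fun k => x ⬝ᵥ (A k *ᵥ x) with hc
    set q : Fin K → ℝ := fun k => if 0 ≤ c k then phi k else plo k with hq
    have hqvert : ∀ k, q k = plo k ∨ q k = phi k := by
      intro k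
      by_cases h' : 0 ≤ c k <;> simp [hq, h']
    have hqneg : x ⬝ᵥ ((A0 + ∑ k, q k • A k) *ᵥ x) < 0 :=
      (spec_neg_iff_qf_neg (herm q)).mp (h q hqvert) x hx
    have expand : ∀ r : Fin K → ℝ,
        x ⬝ᵥ ((A0 + ∑ k, r k • A k) *ᵥ x) = x ⬝ᵥ (A0 *ᵥ x) + ∑ k, r k * c k := by
      intro r
      let F : Matrix (Fin n) (Fin n) ℝ →+ ℝ :=
        { toFun := fun M => x ⬝ᵥ (M *ᵥ x)
          map_zero' := by simp
          map_add' := fun M N => by rw [add_mulVec, dotProduct_add] }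
      have hF : x ⬝ᵥ ((∑ k, r k • A k) *ᵥ x) = ∑ k, x ⬝ᵥ ((r k • A k) *ᵥ x) :=
        map_sum F (fun k => r k • A k) Finset.univ
      rw [add_mulVec, dotProduct_add, hF]
      congr 1
      apply Finset.sum_congr rfl
      intro k _
      rw [smul_mulVec, dotProduct_smul, smul_eq_mul]
    have hle : x ⬝ᵥ ((A0 + ∑ k, p k • A k) *ᵥ x)
        ≤ x ⬝ᵥ ((A0 + ∑ k, q k • A k) *ᵥ x) := by
      rw [expand p, expand q]
      apply add_le_add le_rfl
      apply Finset.sum_le_sum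
      intro k _
      by_cases h' : 0 ≤ c k
      · simp only [hq, if_pos h']
        exact mul_le_mul_of_nonneg_right (hp k).2 h'
      · simp only [hq, if_neg h']
        exact mul_le_mul_of_nonpos_right (hp k).1 (le_of_not_ge h')
    exact lt_of_le_of_lt hle hqneg
end

section
/- Let A(p) = A⁰ + Σ_{k=1}^K p_k·Aᵏ be a symmetric parametric interval matrix with affine-linear dependencies over the parameter box ∏_k [p̲_k, p̄_k]. Then A(p) is stable for every p in the parameter box if and only if both of the following hold: (i) A(p₀) is stable for some (arbitrary) p₀ in the parameter box, and (ii) A(p) is nonsingular for every p in the parameter box (i.e., the parametric interval matrix is regular). -/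
open Matrix Module.End
open scoped RealInnerProductSpace

noncomputable def sphSup {n : ℕ}
    (T : EuclideanSpace ℝ (Fin n) →ₗ[ℝ] EuclideanSpace ℝ (Fin n)) : ℝ :=
  ⨆ x : Metric.sphere (0 : EuclideanSpace ℝ (Fin n)) 1, ⟪T x, (x : EuclideanSpace ℝ (Fin n))⟫

lemma bdd_sph {n : ℕ} (T : EuclideanSpace ℝ (Fin n) →ₗ[ℝ] EuclideanSpace ℝ (Fin n)) :
    BddAbove (Set.range fun x : Metric.sphere (0 : EuclideanSpace ℝ (Fin n)) 1 =>
      ⟪T x, (x : EuclideanSpace ℝ (Fin n))⟫) := by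
  have hc : Continuous fun x : EuclideanSpace ℝ (Fin n) => ⟪T x, x⟫ :=
    (T.continuous_of_finiteDimensional).inner continuous_id
  have himg : ((fun x : EuclideanSpace ℝ (Fin n) => ⟪T x, x⟫) '' Metric.sphere 0 1) =
      Set.range (fun x : Metric.sphere (0 : EuclideanSpace ℝ (Fin n)) 1 =>
        ⟪T x, (x : EuclideanSpace ℝ (Fin n))⟫) := Set.image_eq_range _ _
  rw [← himg]
  exact (isCompact_sphere _ _).bddAbove_image hc.continuousOn

lemma raq_eq {n : ℕ} (T : EuclideanSpace ℝ (Fin n) →ₗ[ℝ] EuclideanSpace ℝ (Fin n))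
    {x : EuclideanSpace ℝ (Fin n)} (hx : x ≠ 0) :
    ⟪T x, x⟫ / ‖x‖ ^ 2 = ⟪T ((‖x‖⁻¹ : ℝ) • x), (‖x‖⁻¹ : ℝ) • x⟫ := by
  have h : ‖x‖ ≠ 0 := norm_ne_zero_iff.2 hx
  rw [T.map_smul, real_inner_smul_left, real_inner_smul_right, sq]
  field_simp

lemma mem_sphere_unit {n : ℕ} {x : EuclideanSpace ℝ (Fin n)} (hx : x ≠ 0) :
    (‖x‖⁻¹ : ℝ) • x ∈ Metric.sphere (0 : EuclideanSpace ℝ (Fin n)) 1 := by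
  rw [mem_sphere_zero_iff_norm]
  exact norm_smul_inv_norm (𝕜 := ℝ) hx

lemma eig_le_sphSup {n : ℕ} {T : EuclideanSpace ℝ (Fin n) →ₗ[ℝ] EuclideanSpace ℝ (Fin n)}
    {μ : ℝ} (h : Module.End.HasEigenvalue T μ) : μ ≤ sphSup T := by
  obtain ⟨v, hv⟩ := h.exists_hasEigenvector
  have hv0 : v ≠ 0 := hv.2
  have hnorm : ‖v‖ ≠ 0 := norm_ne_zero_iff.2 hv0
  have hval : ⟪T v, v⟫ / ‖v‖ ^ 2 = μ := by
    rw [hv.apply_eq_smul, real_inner_smul_left, real_inner_self_eq_norm_sq]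
    field_simp
  have := le_ciSup (bdd_sph T) (⟨_, mem_sphere_unit hv0⟩ :
    Metric.sphere (0 : EuclideanSpace ℝ (Fin n)) 1)
  rw [sphSup]
  calc μ = ⟪T v, v⟫ / ‖v‖ ^ 2 := hval.symm
    _ = ⟪T ((‖v‖⁻¹ : ℝ) • v), (‖v‖⁻¹ : ℝ) • v⟫ := raq_eq T hv0
    _ ≤ _ := this

lemma hasEigenvalue_sphSup {n : ℕ} (hn : 0 < n)
    {T : EuclideanSpace ℝ (Fin n) →ₗ[ℝ] EuclideanSpace ℝ (Fin n)} (hT : T.IsSymmetric) :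
    Module.End.HasEigenvalue T (sphSup T) := by
  haveI : Nonempty (Fin n) := ⟨⟨0, hn⟩⟩
  haveI : Nontrivial (EuclideanSpace ℝ (Fin n)) := by infer_instance
  have h := hT.hasEigenvalue_iSup_of_finiteDimensional
  have heq : (⨆ x : { x : EuclideanSpace ℝ (Fin n) // x ≠ 0 },
      RCLike.re ⟪T x, (x : EuclideanSpace ℝ (Fin n))⟫ / ‖(x : EuclideanSpace ℝ (Fin n))‖ ^ 2)
      = sphSup T := by
    obtain ⟨x₀, hx₀⟩ := exists_ne (0 : EuclideanSpace ℝ (Fin n))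
    haveI : Nonempty { x : EuclideanSpace ℝ (Fin n) // x ≠ 0 } := ⟨⟨x₀, hx₀⟩⟩
    haveI : Nonempty (Metric.sphere (0 : EuclideanSpace ℝ (Fin n)) 1) :=
      ⟨⟨_, mem_sphere_unit hx₀⟩⟩
    obtain ⟨b, hb⟩ := bdd_sph T
    apply le_antisymm
    · apply ciSup_le
      rintro ⟨x, hx⟩
      simp only [RCLike.re_to_real]
      rw [raq_eq T hx]
      exact le_ciSup (bdd_sph T) (⟨_, mem_sphere_unit hx⟩ :
        Metric.sphere (0 : EuclideanSpace ℝ (Fin n)) 1)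
    · apply ciSup_le
      rintro ⟨x, hx⟩
      have hx0 : x ≠ 0 := by
        intro hc
        rw [Metric.mem_sphere, hc] at hx
        simp at hx
      have h1 : ⟪T x, x⟫ ≤ RCLike.re ⟪T x, x⟫ / ‖x‖ ^ 2 := by
        rw [mem_sphere_zero_iff_norm] at hx
        simp [hx]
      refine le_trans h1 (le_ciSup (f := fun y : { x : EuclideanSpace ℝ (Fin n) // x ≠ 0 } =>
        RCLike.re ⟪T y, (y : EuclideanSpace ℝ (Fin n))⟫ / ‖(y : EuclideanSpace ℝ (Fin n))‖ ^ 2)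
        ?_ ⟨x, hx0⟩)
      refine ⟨b, ?_⟩
      rintro y ⟨⟨z, hz⟩, rfl⟩
      simp only [RCLike.re_to_real]
      rw [raq_eq T hz]
      exact hb ⟨⟨_, mem_sphere_unit hz⟩, rfl⟩
  rwa [heq] at h

lemma spectrum_iff_eig {n : ℕ} (M : Matrix (Fin n) (Fin n) ℝ) (μ : ℝ) :
    μ ∈ spectrum ℝ M ↔ Module.End.HasEigenvalue (Matrix.toEuclideanLin M) μ := by
  rw [Module.End.hasEigenvalue_iff_mem_spectrum, Matrix.spectrum_toEuclideanLin]

lemma isSymmetric_of_isSymm {n : ℕ} {M : Matrix (Fin n) (Fin n) ℝ} (hM : M.IsSymm) :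
    (Matrix.toEuclideanLin M).IsSymmetric := by
  rw [← Matrix.isHermitian_iff_isSymmetric, Matrix.IsHermitian,
    Matrix.conjTranspose_eq_transpose_of_trivial]
  exact hM

lemma spec_lt_iff {n : ℕ} (hn : 0 < n) {M : Matrix (Fin n) (Fin n) ℝ} (hM : M.IsSymm) :
    (∀ μ ∈ spectrum ℝ M, μ < 0) ↔ sphSup (Matrix.toEuclideanLin M) < 0 := by
  constructor
  · intro h
    exact h _ ((spectrum_iff_eig M _).2 (hasEigenvalue_sphSup hn (isSymmetric_of_isSymm hM)))
  · intro h μ hμ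
    exact lt_of_le_of_lt (eig_le_sphSup ((spectrum_iff_eig M μ).1 hμ)) h

lemma singular_of_sphSup_eq_zero {n : ℕ} (hn : 0 < n) {M : Matrix (Fin n) (Fin n) ℝ}
    (hM : M.IsSymm) (h : sphSup (Matrix.toEuclideanLin M) = 0) : M.det = 0 := by
  have h0 : (0 : ℝ) ∈ spectrum ℝ M := by
    rw [spectrum_iff_eig, ← h]
    exact hasEigenvalue_sphSup hn (isSymmetric_of_isSymm hM)
  rw [spectrum.zero_mem_iff] at h0
  by_contra hdet
  exact h0 ((Matrix.isUnit_iff_isUnit_det M).2 (isUnit_iff_ne_zero.2 hdet))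

lemma det_ne_zero_spec {n : ℕ} {M : Matrix (Fin n) (Fin n) ℝ} (hdet : M.det ≠ 0) :
    (0 : ℝ) ∉ spectrum ℝ M := by
  rw [spectrum.zero_mem_iff, not_not]
  exact (Matrix.isUnit_iff_isUnit_det M).2 (isUnit_iff_ne_zero.2 hdet)

lemma le_sphSup {n : ℕ} (T : EuclideanSpace ℝ (Fin n) →ₗ[ℝ] EuclideanSpace ℝ (Fin n))
    {x : EuclideanSpace ℝ (Fin n)} (hx : x ∈ Metric.sphere (0 : EuclideanSpace ℝ (Fin n)) 1) :
    ⟪T x, x⟫ ≤ sphSup T :=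
  le_ciSup (bdd_sph T) ⟨x, hx⟩

lemma sphSup_le {n : ℕ} (T : EuclideanSpace ℝ (Fin n) →ₗ[ℝ] EuclideanSpace ℝ (Fin n))
    [Nonempty (Metric.sphere (0 : EuclideanSpace ℝ (Fin n)) 1)] {c : ℝ}
    (h : ∀ x ∈ Metric.sphere (0 : EuclideanSpace ℝ (Fin n)) 1, ⟪T x, x⟫ ≤ c) :
    sphSup T ≤ c :=
  ciSup_le fun x => h x x.2

/-- A symmetric parametric interval matrix `A(p) = A⁰ + ∑ pₖ·Aᵏ` is stable (all eigenvalues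
strictly negative) for every `p` in the parameter box if and only if (i) `A(p₀)` is stable
for some `p₀` in the box, and (ii) `A(p)` is nonsingular for every `p` in the box. -/
theorem stmt_4 {n K : ℕ}
    (A0 : Matrix (Fin n) (Fin n) ℝ) (A : Fin K → Matrix (Fin n) (Fin n) ℝ)
    (hA0 : A0.IsSymm) (hA : ∀ k, (A k).IsSymm)
    (plo phi : Fin K → ℝ) (hbox : ∀ k, plo k ≤ phi k) :
    (∀ p : Fin K → ℝ, (∀ k, plo k ≤ p k ∧ p k ≤ phi k) →
        ∀ μ ∈ spectrum ℝ (A0 + ∑ k, p k • A k), μ < 0) ↔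
    ((∃ p0 : Fin K → ℝ, (∀ k, plo k ≤ p0 k ∧ p0 k ≤ phi k) ∧
        ∀ μ ∈ spectrum ℝ (A0 + ∑ k, p0 k • A k), μ < 0) ∧
      (∀ p : Fin K → ℝ, (∀ k, plo k ≤ p k ∧ p k ≤ phi k) →
        (A0 + ∑ k, p k • A k).det ≠ 0)) := by
  have hsymm : ∀ p : Fin K → ℝ, (A0 + ∑ k, p k • A k).IsSymm := by
    intro p
    show _ᵀ = _
    rw [Matrix.transpose_add, Matrix.transpose_sum, hA0]
    congr 1
    refine Finset.sum_congr rfl fun k _ => ?_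
    rw [Matrix.transpose_smul, hA k]
  constructor
  · intro hstab
    constructor
    · exact ⟨plo, fun k => ⟨le_refl _, hbox k⟩, hstab plo fun k => ⟨le_refl _, hbox k⟩⟩
    · intro p hp heq
      have h0 : (0 : ℝ) ∈ spectrum ℝ (A0 + ∑ k, p k • A k) := by
        rw [spectrum.zero_mem_iff]
        intro hu
        exact ((Matrix.isUnit_iff_isUnit_det _).1 hu).ne_zero heq
      exact absurd (hstab p hp 0 h0) (lt_irrefl 0)
  · rintro ⟨⟨p0, hp0, h0⟩, hreg⟩ p1 hp1
    rcases Nat.eq_zero_or_pos n with hn | hn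
    · subst hn
      intro μ hμ
      haveI : Subsingleton (Matrix (Fin 0) (Fin 0) ℝ) :=
        ⟨fun M N => by ext i j; exact i.elim0⟩
      exact absurd (isUnit_of_subsingleton _) (spectrum.mem_iff.mp hμ)
    · set M0 : Matrix (Fin n) (Fin n) ℝ := A0 + ∑ k, p0 k • A k with hM0
      set B : Matrix (Fin n) (Fin n) ℝ := ∑ k, (p1 k - p0 k) • A k with hB
      set q : ℝ → Fin K → ℝ := fun t k => p0 k + t * (p1 k - p0 k) with hqdef
      have hq : ∀ t : ℝ, A0 + ∑ k, q t k • A k = M0 + t • B := by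
        intro t
        rw [hM0, hB, Finset.smul_sum, add_assoc, ← Finset.sum_add_distrib]
        congr 1
        refine Finset.sum_congr rfl fun k _ => ?_
        rw [smul_smul, ← add_smul]
      have hsymt : ∀ t : ℝ, (M0 + t • B).IsSymm := fun t => (hq t) ▸ hsymm (q t)
      -- sphere is nonempty
      have hx₁ : EuclideanSpace.single (⟨0, hn⟩ : Fin n) (1 : ℝ) ∈
          Metric.sphere (0 : EuclideanSpace ℝ (Fin n)) 1 := by
        rw [mem_sphere_zero_iff_norm, EuclideanSpace.norm_single]
        norm_num
      haveI : Nonempty (Metric.sphere (0 : EuclideanSpace ℝ (Fin n)) 1) := ⟨⟨_, hx₁⟩⟩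
      -- expansion of the quadratic form along the line
      have hexp : ∀ (t : ℝ) (x : EuclideanSpace ℝ (Fin n)),
          ⟪Matrix.toEuclideanLin (M0 + t • B) x, x⟫ =
            ⟪Matrix.toEuclideanLin M0 x, x⟫ + t * ⟪Matrix.toEuclideanLin B x, x⟫ := by
        intro t x
        rw [map_add, _root_.map_smul, LinearMap.add_apply, LinearMap.smul_apply,
          inner_add_left, real_inner_smul_left]
      -- a bound on the B-form on the sphere
      have hBc : Continuous fun x : EuclideanSpace ℝ (Fin n) =>
          ⟪Matrix.toEuclideanLin B x, x⟫ :=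
        ((Matrix.toEuclideanLin B).continuous_of_finiteDimensional).inner continuous_id
      obtain ⟨C, hC⟩ := (isCompact_sphere (0 : EuclideanSpace ℝ (Fin n))
        1).exists_bound_of_continuousOn hBc.continuousOn
      have hC0 : 0 ≤ C := le_trans (norm_nonneg _) (hC _ hx₁)
      -- Lipschitz estimate
      have hstep : ∀ s t : ℝ, sphSup (Matrix.toEuclideanLin (M0 + t • B)) ≤
          sphSup (Matrix.toEuclideanLin (M0 + s • B)) + C * |t - s| := by
        intro s t
        apply sphSup_le
        intro x hx
        have h1 := le_sphSup (Matrix.toEuclideanLin (M0 + s • B)) hx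
        have h2 : (t - s) * ⟪Matrix.toEuclideanLin B x, x⟫ ≤ C * |t - s| := by
          calc (t - s) * ⟪Matrix.toEuclideanLin B x, x⟫
              ≤ |(t - s) * ⟪Matrix.toEuclideanLin B x, x⟫| := le_abs_self _
            _ = |t - s| * |⟪Matrix.toEuclideanLin B x, x⟫| := abs_mul _ _
            _ ≤ |t - s| * C := by
                have := hC x hx
                rw [Real.norm_eq_abs] at this
                exact mul_le_mul_of_nonneg_left this (abs_nonneg _)
            _ = C * |t - s| := mul_comm _ _
        calc ⟪Matrix.toEuclideanLin (M0 + t • B) x, x⟫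
            = ⟪Matrix.toEuclideanLin (M0 + s • B) x, x⟫ +
              (t - s) * ⟪Matrix.toEuclideanLin B x, x⟫ := by rw [hexp t x, hexp s x]; ring
          _ ≤ _ := add_le_add h1 h2
      have hcont : Continuous (fun t : ℝ => sphSup (Matrix.toEuclideanLin (M0 + t • B))) := by
        apply LipschitzWith.continuous (K := Real.toNNReal C)
        apply LipschitzWith.of_dist_le_mul
        intro t s
        rw [Real.dist_eq, Real.dist_eq, Real.coe_toNNReal C hC0, abs_sub_le_iff]
        have h1 := hstep s t
        have h2 := hstep t s
        rw [abs_sub_comm] at h2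
        constructor <;> linarith
      -- value at 0
      have hM00 : M0 + (0 : ℝ) • B = M0 := by rw [zero_smul, add_zero]
      have hf0 : sphSup (Matrix.toEuclideanLin (M0 + (0 : ℝ) • B)) < 0 := by
        rw [hM00]
        exact (spec_lt_iff hn (hsymm p0)).1 h0
      -- value at 1 is negative
      have hf1 : sphSup (Matrix.toEuclideanLin (M0 + (1 : ℝ) • B)) < 0 := by
        by_contra hge
        push_neg at hge
        have h01 : (0 : ℝ) ∈ Set.Icc (sphSup (Matrix.toEuclideanLin (M0 + (0 : ℝ) • B)))
            (sphSup (Matrix.toEuclideanLin (M0 + (1 : ℝ) • B))) := ⟨hf0.le, hge⟩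
        obtain ⟨t, ht, hft⟩ := intermediate_value_Icc zero_le_one hcont.continuousOn h01
        have hdet := singular_of_sphSup_eq_zero hn (hsymt t) hft
        have hbox_t : ∀ k, plo k ≤ q t k ∧ q t k ≤ phi k := by
          intro k
          constructor
          · show plo k ≤ p0 k + t * (p1 k - p0 k)
            nlinarith [(hp0 k).1, (hp0 k).2, (hp1 k).1, (hp1 k).2, ht.1, ht.2]
          · show p0 k + t * (p1 k - p0 k) ≤ phi k
            nlinarith [(hp0 k).1, (hp0 k).2, (hp1 k).1, (hp1 k).2, ht.1, ht.2]
        exact hreg (q t) hbox_t (by rw [hq t]; exact hdet)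
      have hp1eq : A0 + ∑ k, p1 k • A k = M0 + (1 : ℝ) • B := by
        have := hq 1
        simp only [hqdef, one_mul] at this
        rw [← this]
        congr 1
        refine Finset.sum_congr rfl fun k _ => ?_
        congr 1
        ring
      intro μ hμ
      rw [hp1eq] at hμ
      exact (spec_lt_iff hn (hsymt 1)).2 hf1 μ hμ
end

section
/- Let A(p) = A⁰ + Σ_{k=1}^K p_k·Aᵏ be a symmetric parametric interval matrix with affine-linear dependencies over the parameter box ∏_k [p̌_k − Δ_k, p̌_k + Δ_k], and let B = Σ_{k=1}^K Δ_k·|Aᵏ|. If the midpoint matrix A(p̌) is stable and ρ(|A(p̌)⁻¹|·B) < 1, then A(p) is stable for every p in the parameter box. -/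
open Matrix

section Aux

open Filter RealInnerProductSpace

section PF
attribute [local instance] Matrix.linftyOpNormedRing Matrix.linftyOpNormedAlgebra

private lemma one_le_specRad {n : ℕ} (hn : 0 < n) (E : Matrix (Fin n) (Fin n) ℝ)
    (hE : ∀ i j, 0 ≤ E i j) (v : Fin n → ℝ) (hv0 : v ≠ 0) (hvnn : ∀ i, 0 ≤ v i)
    (hle : ∀ i, v i ≤ (E *ᵥ v) i) : 1 ≤ specRad E := by
  haveI : Nonempty (Fin n) := ⟨⟨0, hn⟩⟩
  have hpow : ∀ m : ℕ, ∀ i, v i ≤ ((E ^ m) *ᵥ v) i := by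
    intro m
    induction m with
    | zero => intro i; simp [Matrix.one_mulVec]
    | succ m ih =>
      intro i
      have h1 : ((E ^ (m+1)) *ᵥ v) i = (E *ᵥ ((E ^ m) *ᵥ v)) i := by
        rw [pow_succ', Matrix.mulVec_mulVec]
      rw [h1]
      calc v i ≤ (E *ᵥ v) i := hle i
        _ ≤ (E *ᵥ ((E ^ m) *ᵥ v)) i := by
            simp only [Matrix.mulVec, dotProduct]
            exact Finset.sum_le_sum fun j _ => mul_le_mul_of_nonneg_left (ih j) (hE i j)
  have hvpos : 0 < ‖v‖ := by simpa [norm_pos_iff] using hv0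
  have hnorm : ∀ m : ℕ, (1 : ℝ) ≤ ‖E ^ m‖ := by
    intro m
    have h1 : ‖v‖ ≤ ‖(E ^ m) *ᵥ v‖ := by
      rw [pi_norm_le_iff_of_nonneg (norm_nonneg _)]
      intro i
      calc ‖v i‖ = v i := abs_of_nonneg (hvnn i)
        _ ≤ ((E ^ m) *ᵥ v) i := hpow m i
        _ ≤ ‖((E ^ m) *ᵥ v) i‖ := le_abs_self _
        _ ≤ ‖(E ^ m) *ᵥ v‖ := norm_le_pi_norm _ i
    have h4 : ‖(E ^ m) *ᵥ v‖ ≤ ‖E ^ m‖ * ‖v‖ := Matrix.linfty_opNorm_mulVec _ _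
    nlinarith
  set Ec := E.map Complex.ofReal with hEc
  have hmapnorm : ∀ m : ℕ, ‖Ec ^ m‖₊ = ‖E ^ m‖₊ := by
    intro m
    have h1 : Ec ^ m = (E ^ m).map Complex.ofReal := by
      have := map_pow (Complex.ofRealHom.mapMatrix (m := Fin n)) E m
      exact this.symm
    rw [h1, Matrix.linfty_opNNNorm_def, Matrix.linfty_opNNNorm_def]
    congr 1; ext i
    congr 1
    simp [Matrix.map_apply]
  have hgel := spectrum.pow_nnnorm_pow_one_div_tendsto_nhds_spectralRadius Ec
  have hone : (1 : ENNReal) ≤ spectralRadius ℂ Ec := by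
    refine ge_of_tendsto hgel (Filter.Eventually.of_forall fun m => ?_)
    have h2 : (1 : NNReal) ≤ ‖Ec ^ m‖₊ := by
      rw [hmapnorm m]
      have := hnorm m
      simpa [← NNReal.coe_le_coe] using this
    rcases Nat.eq_zero_or_pos m with hm | hm
    · simp [hm]
    · refine ENNReal.one_le_rpow ?_ (by positivity)
      exact_mod_cast h2
  have hne : (spectrum ℂ Ec).Nonempty := spectrum.nonempty Ec
  have hcpt : IsCompact (spectrum ℂ Ec) := spectrum.isCompact Ec
  obtain ⟨μ₀, hμ₀mem, hμ₀max⟩ := hcpt.exists_isMaxOn hne (continuous_norm.continuousOn)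
  have hrad : spectralRadius ℂ Ec ≤ (‖μ₀‖₊ : ENNReal) := by
    rw [spectralRadius]
    refine iSup₂_le fun k hk => ?_
    have : ‖k‖ ≤ ‖μ₀‖ := hμ₀max hk
    exact_mod_cast (by simpa [← NNReal.coe_le_coe] using this :
      ‖k‖₊ ≤ ‖μ₀‖₊)
  have habs : (1 : ℝ) ≤ ‖μ₀‖ := by
    have := le_trans hone hrad
    exact_mod_cast (by exact_mod_cast this : (1 : NNReal) ≤ ‖μ₀‖₊)
  have hbdd : BddAbove {r : ℝ | ∃ μ : ℂ, μ ∈ spectrum ℂ Ec ∧ r = ‖μ‖} := by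
    refine ⟨‖μ₀‖, fun r hr => ?_⟩
    obtain ⟨μ, hμ, rfl⟩ := hr
    exact hμ₀max hμ
  exact le_trans habs (le_csSup hbdd ⟨μ₀, hμ₀mem, rfl⟩)

end PF

private lemma unit_of_pert {n : ℕ} (hn : 0 < n) (Amid D B : Matrix (Fin n) (Fin n) ℝ)
    (hAmidUnit : IsUnit Amid)
    (hDB : ∀ i j, |D i j| ≤ B i j)
    (hρ : specRad (mAbs Amid⁻¹ * B) < 1) : IsUnit (Amid + D) := by
  by_contra hsing
  have hdet : IsUnit Amid.det := (Matrix.isUnit_iff_isUnit_det _).1 hAmidUnit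
  set C := Amid⁻¹ * D with hC
  have hfact : Amid * (1 + C) = Amid + D := by
    rw [mul_add, mul_one, hC, Matrix.mul_nonsing_inv_cancel_left _ _ hdet]
  have hnonunit : ¬ IsUnit (1 + C) := fun h => hsing (hfact ▸ hAmidUnit.mul h)
  have hspec : (-1 : ℝ) ∈ spectrum ℝ C := by
    rw [spectrum.mem_iff]
    intro h
    apply hnonunit
    have he : algebraMap ℝ (Matrix (Fin n) (Fin n) ℝ) (-1) - C = -(1 + C) := by
      rw [map_neg, _root_.map_one]
      abel
    rw [he] at h
    simpa using h.neg
  rw [← AlgEquiv.spectrum_eq (Matrix.toLinAlgEquiv' (R := ℝ) (n := Fin n)) C,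
    ← Module.End.hasEigenvalue_iff_mem_spectrum] at hspec
  obtain ⟨x, hx⟩ := hspec.exists_hasEigenvector
  have hx0 : x ≠ 0 := hx.right
  have hCx : C *ᵥ x = (-1 : ℝ) • x := by
    have := hx.apply_eq_smul
    simpa [Matrix.toLinAlgEquiv'_apply, Matrix.toLin'_apply] using this
  have hBnn : ∀ i j, 0 ≤ B i j := fun i j => le_trans (abs_nonneg _) (hDB i j)
  set E := mAbs Amid⁻¹ * B with hE
  have hEnn : ∀ i j, 0 ≤ E i j := by
    intro i j
    rw [hE]
    simp only [Matrix.mul_apply]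
    exact Finset.sum_nonneg fun l _ => mul_nonneg (abs_nonneg _) (hBnn l j)
  have hCE : ∀ i j, |C i j| ≤ E i j := by
    intro i j
    rw [hC, hE]
    simp only [Matrix.mul_apply]
    calc |∑ l, Amid⁻¹ i l * D l j| ≤ ∑ l, |Amid⁻¹ i l * D l j| :=
          Finset.abs_sum_le_sum_abs _ _
      _ ≤ ∑ l, mAbs Amid⁻¹ i l * B l j := by
          refine Finset.sum_le_sum fun l _ => ?_
          rw [abs_mul]
          exact mul_le_mul_of_nonneg_left (hDB l j) (abs_nonneg _)
  set v : Fin n → ℝ := fun i => |x i| with hv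
  have hvne : v ≠ 0 := by
    intro h
    apply hx0
    funext i
    have := congrFun h i
    simpa [hv, abs_eq_zero] using this
  have hle : ∀ i, v i ≤ (E *ᵥ v) i := by
    intro i
    have h1 : (C *ᵥ x) i = -x i := by rw [hCx]; simp
    have h2 : |x i| = |(C *ᵥ x) i| := by rw [h1, abs_neg]
    calc v i = |(C *ᵥ x) i| := h2
      _ = |∑ j, C i j * x j| := by rw [Matrix.mulVec, dotProduct]
      _ ≤ ∑ j, |C i j| * |x j| := by
          refine le_trans (Finset.abs_sum_le_sum_abs _ _) ?_
          exact le_of_eq (Finset.sum_congr rfl fun j _ => abs_mul _ _)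
      _ ≤ ∑ j, E i j * v j := Finset.sum_le_sum fun j _ =>
          mul_le_mul_of_nonneg_right (hCE i j) (abs_nonneg _)
      _ = (E *ᵥ v) i := by rw [Matrix.mulVec, dotProduct]
  exact absurd (one_le_specRad hn E hEnn v hvne (fun i => abs_nonneg _) hle) (not_le.2 hρ)

private lemma isHermitian_of_isSymm {n : ℕ} {M : Matrix (Fin n) (Fin n) ℝ} (h : M.IsSymm) :
    M.IsHermitian := by
  rw [Matrix.IsHermitian, Matrix.conjTranspose_eq_transpose_of_trivial]
  exact h

private lemma stable_path {n : ℕ} (hn : 0 < n) (Amid D : Matrix (Fin n) (Fin n) ℝ)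
    (hAs : Amid.IsSymm) (hDs : D.IsSymm)
    (hmid : ∀ μ ∈ spectrum ℝ Amid, μ < 0)
    (hinv : ∀ t : ℝ, t ∈ Set.Icc (0:ℝ) 1 → IsUnit (Amid + t • D)) :
    ∀ μ ∈ spectrum ℝ (Amid + D), μ < 0 := by
  haveI : Nonempty (Fin n) := ⟨⟨0, hn⟩⟩
  haveI : Nontrivial (EuclideanSpace ℝ (Fin n)) := by
    refine ⟨EuclideanSpace.single ⟨0, hn⟩ 1, 0, fun h => ?_⟩
    simpa [EuclideanSpace.single_apply] using congrArg (fun v : EuclideanSpace ℝ (Fin n) => v ⟨0, hn⟩) h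
  haveI : Nonempty {x : EuclideanSpace ℝ (Fin n) // x ≠ 0} := by
    obtain ⟨y, hy⟩ := exists_ne (0 : EuclideanSpace ℝ (Fin n))
    exact ⟨⟨y, hy⟩⟩
  set T0 := Matrix.toEuclideanLin Amid with hT0
  set T1 := Matrix.toEuclideanLin D with hT1
  set a : {x : EuclideanSpace ℝ (Fin n) // x ≠ 0} → ℝ :=
    fun x => ⟪T0 x, (x : EuclideanSpace ℝ (Fin n))⟫ / ‖(x : EuclideanSpace ℝ (Fin n))‖ ^ 2 with ha
  set b : {x : EuclideanSpace ℝ (Fin n) // x ≠ 0} → ℝ :=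
    fun x => ⟪T1 x, (x : EuclideanSpace ℝ (Fin n))⟫ / ‖(x : EuclideanSpace ℝ (Fin n))‖ ^ 2 with hb
  set g : ℝ → ℝ := fun t => ⨆ x, (a x + t * b x) with hg
  have hquot : ∀ (L : EuclideanSpace ℝ (Fin n) →ₗ[ℝ] EuclideanSpace ℝ (Fin n))
      (x : EuclideanSpace ℝ (Fin n)),
      |⟪L x, x⟫| / ‖x‖ ^ 2 ≤ ‖LinearMap.toContinuousLinearMap L‖ := by
    intro L x
    rcases eq_or_ne x 0 with rfl | hx
    · simp [norm_nonneg]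
    · have hxn : 0 < ‖x‖ := norm_pos_iff.2 hx
      have h1 : |⟪L x, x⟫| ≤ ‖L x‖ * ‖x‖ := abs_real_inner_le_norm _ _
      have h2 : ‖L x‖ ≤ ‖LinearMap.toContinuousLinearMap L‖ * ‖x‖ := by
        have := (LinearMap.toContinuousLinearMap L).le_opNorm x
        simpa using this
      rw [div_le_iff₀ (by positivity)]
      nlinarith [norm_nonneg (L x)]
  set c0 := ‖LinearMap.toContinuousLinearMap T0‖ with hc0
  set c := ‖LinearMap.toContinuousLinearMap T1‖ with hc
  have habs_a : ∀ x, |a x| ≤ c0 := by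
    intro x
    rw [ha]
    simp only []
    rw [abs_div, abs_of_nonneg (by positivity : (0:ℝ) ≤ ‖(x : EuclideanSpace ℝ (Fin n))‖ ^ 2)]
    exact hquot T0 x
  have habs_b : ∀ x, |b x| ≤ c := by
    intro x
    rw [hb]
    simp only []
    rw [abs_div, abs_of_nonneg (by positivity : (0:ℝ) ≤ ‖(x : EuclideanSpace ℝ (Fin n))‖ ^ 2)]
    exact hquot T1 x
  have hbdd : ∀ t : ℝ, BddAbove (Set.range fun x => a x + t * b x) := by
    intro t
    refine ⟨c0 + |t| * c, fun r hr => ?_⟩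
    obtain ⟨x, rfl⟩ := hr
    calc a x + t * b x ≤ |a x| + |t| * |b x| := by
          have := abs_mul t (b x)
          have h1 := le_abs_self (a x)
          have h2 := le_abs_self (t * b x)
          nlinarith
      _ ≤ c0 + |t| * c := add_le_add (habs_a x)
          (mul_le_mul_of_nonneg_left (habs_b x) (abs_nonneg t))
  have hg2 : ∀ t s : ℝ, g t ≤ g s + |t - s| * c := by
    intro t s
    refine ciSup_le fun x => ?_
    have h1 : a x + t * b x = (a x + s * b x) + (t - s) * b x := by ring
    rw [h1]
    have h2 : (t - s) * b x ≤ |t - s| * c := by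
      calc (t - s) * b x ≤ |(t - s) * b x| := le_abs_self _
        _ = |t - s| * |b x| := abs_mul _ _
        _ ≤ |t - s| * c := mul_le_mul_of_nonneg_left (habs_b x) (abs_nonneg _)
    have h3 : a x + s * b x ≤ g s := le_ciSup (hbdd s) x
    linarith
  have hcnn : 0 ≤ c := norm_nonneg _
  have hcont : Continuous g := by
    have hlip : LipschitzWith (Real.toNNReal c) g := by
      refine LipschitzWith.of_dist_le_mul fun t s => ?_
      rw [Real.dist_eq, Real.dist_eq, Real.coe_toNNReal _ hcnn]
      rw [abs_sub_le_iff]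
      constructor
      · have := hg2 t s; nlinarith [abs_nonneg (t - s)]
      · have := hg2 s t
        rw [abs_sub_comm] at this
        nlinarith
    exact hlip.continuous
  have heig : ∀ t : ℝ, g t ∈ spectrum ℝ (Amid + t • D) := by
    intro t
    have hherm : (Amid + t • D).IsHermitian := by
      apply isHermitian_of_isSymm
      rw [Matrix.IsSymm] at *
      rw [Matrix.transpose_add, Matrix.transpose_smul, hAs, hDs]
    have hsymm := Matrix.isHermitian_iff_isSymmetric.1 hherm
    have h := hsymm.hasEigenvalue_iSup_of_finiteDimensional
    have hTadd : Matrix.toEuclideanLin (Amid + t • D) = T0 + t • T1 := by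
      rw [hT0, hT1, map_add, LinearEquiv.map_smul]
    have hrw : (⨆ x : {x : EuclideanSpace ℝ (Fin n) // x ≠ 0},
        RCLike.re ⟪(Matrix.toEuclideanLin (Amid + t • D)) x, (x : EuclideanSpace ℝ (Fin n))⟫ /
          ‖(x : EuclideanSpace ℝ (Fin n))‖ ^ 2) = g t := by
      rw [hg]
      congr 1
      funext x
      rw [hTadd]
      simp only [LinearMap.add_apply, LinearMap.smul_apply, inner_add_left,
        real_inner_smul_left, RCLike.re_to_real, ha, hb]
      ring
    rw [hrw] at h
    have h2 := h.mem_spectrum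
    rw [Matrix.spectrum_toEuclideanLin] at h2
    exact_mod_cast h2
  have hg0 : g 0 < 0 := by
    have := heig 0
    rw [zero_smul, add_zero] at this
    exact hmid _ this
  have hgne : ∀ t ∈ Set.Icc (0:ℝ) 1, g t ≠ 0 := by
    intro t ht h0
    have := heig t
    rw [h0] at this
    exact (spectrum.zero_mem_iff ℝ).1 this (hinv t ht)
  have hg1 : g 1 < 0 := by
    by_contra h
    push_neg at h
    have h1 : (0:ℝ) ∈ Set.Icc (g 0) (g 1) := ⟨le_of_lt hg0, h⟩
    have h2 := intermediate_value_Icc (zero_le_one (α := ℝ)) hcont.continuousOn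
    obtain ⟨t, ht, ht0⟩ := h2 h1
    exact hgne t ht ht0
  intro μ hμ
  have hμ' : μ ∈ spectrum ℝ (Matrix.toEuclideanLin (Amid + D)) := by
    rw [Matrix.spectrum_toEuclideanLin]
    exact hμ
  rw [← Module.End.hasEigenvalue_iff_mem_spectrum] at hμ'
  obtain ⟨x, hx⟩ := hμ'.exists_hasEigenvector
  have hx0 : x ≠ 0 := hx.right
  have hxn : (0:ℝ) < ‖x‖ := norm_pos_iff.2 hx0
  have happ : (Matrix.toEuclideanLin (Amid + D)) x = μ • x := hx.apply_eq_smul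
  have hTadd : Matrix.toEuclideanLin (Amid + D) = T0 + T1 := by
    rw [hT0, hT1, map_add]
  have hval : a ⟨x, hx0⟩ + 1 * b ⟨x, hx0⟩ = μ := by
    rw [ha, hb]
    simp only [one_mul]
    rw [← add_div]
    rw [← inner_add_left]
    have : T0 x + T1 x = μ • x := by
      rw [← LinearMap.add_apply, ← hTadd]
      exact happ
    rw [this, real_inner_smul_left, real_inner_self_eq_norm_sq]
    field_simp
  have hle : a ⟨x, hx0⟩ + 1 * b ⟨x, hx0⟩ ≤ g 1 := le_ciSup (hbdd 1) _
  rw [hval] at hle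
  exact lt_of_le_of_lt hle hg1

end Aux

/-- If the midpoint matrix `A(p̌)` of a symmetric parametric interval matrix is stable
(all eigenvalues strictly negative) and `ρ(|A(p̌)⁻¹|·B) < 1` with `B = ∑ Δₖ·|Aᵏ|`, then
`A(p)` is stable for every `p` in the parameter box. -/
theorem stmt_5 {n K : ℕ}
    (A0 : Matrix (Fin n) (Fin n) ℝ) (A : Fin K → Matrix (Fin n) (Fin n) ℝ)
    (hA0 : A0.IsSymm) (hA : ∀ k, (A k).IsSymm)
    (pc Δ : Fin K → ℝ) (hΔ : ∀ k, 0 ≤ Δ k)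
    (Amid : Matrix (Fin n) (Fin n) ℝ) (hAmid : Amid = A0 + ∑ k, pc k • A k)
    (B : Matrix (Fin n) (Fin n) ℝ) (hB : B = ∑ k, Δ k • mAbs (A k))
    (hmid : ∀ μ ∈ spectrum ℝ Amid, μ < 0)
    (hρ : specRad (mAbs Amid⁻¹ * B) < 1) :
    ∀ p : Fin K → ℝ, (∀ k, pc k - Δ k ≤ p k ∧ p k ≤ pc k + Δ k) →
      ∀ μ ∈ spectrum ℝ (A0 + ∑ k, p k • A k), μ < 0 := by
  intro p hp
  rcases Nat.eq_zero_or_pos n with hn | hn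
  · subst hn
    intro μ hμ
    exfalso
    haveI : Subsingleton (Matrix (Fin 0) (Fin 0) ℝ) :=
      ⟨fun a b => by ext i; exact i.elim0⟩
    rw [spectrum.mem_iff] at hμ
    exact hμ (isUnit_of_subsingleton _)
  -- n > 0
  have hAmidUnit : IsUnit Amid := by
    by_contra h
    have h0 : (0 : ℝ) ∈ spectrum ℝ Amid := (spectrum.zero_mem_iff ℝ).2 h
    exact absurd (hmid 0 h0) (lt_irrefl 0)
  set D := ∑ k, (p k - pc k) • A k with hD
  -- entrywise bound on D
  have hDB : ∀ i j, |D i j| ≤ B i j := by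
    intro i j
    rw [hD, hB]
    have h1 : (∑ k, (p k - pc k) • A k) i j = ∑ k, (p k - pc k) * (A k i j) := by
      simp only [Matrix.sum_apply, Matrix.smul_apply, smul_eq_mul]
    have h2 : (∑ k, Δ k • mAbs (A k)) i j = ∑ k, Δ k * |A k i j| := by
      simp only [Matrix.sum_apply, Matrix.smul_apply, mAbs, Matrix.of_apply, smul_eq_mul]
    rw [h1, h2]
    refine le_trans (Finset.abs_sum_le_sum_abs _ _) (Finset.sum_le_sum fun k _ => ?_)
    rw [abs_mul]
    have h3 : |p k - pc k| ≤ Δ k := by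
      rw [abs_le]
      constructor <;> [linarith [(hp k).1]; linarith [(hp k).2]]
    exact mul_le_mul_of_nonneg_right h3 (abs_nonneg _)
  -- A(p) = Amid + D
  have hApD : A0 + ∑ k, p k • A k = Amid + D := by
    rw [hAmid, hD]
    have : ∑ k, p k • A k = (∑ k, pc k • A k) + ∑ k, (p k - pc k) • A k := by
      rw [← Finset.sum_add_distrib]
      exact Finset.sum_congr rfl fun k _ => by rw [← add_smul]; ring_nf
    rw [this]
    abel
  -- invertibility along the path
  have hinv : ∀ t : ℝ, t ∈ Set.Icc (0:ℝ) 1 → IsUnit (Amid + t • D) := by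
    intro t ht
    refine unit_of_pert hn Amid (t • D) B hAmidUnit (fun i j => ?_) hρ
    have h1 : (t • D) i j = t * D i j := rfl
    rw [h1, abs_mul]
    have h2 : |t| ≤ 1 := by
      rw [abs_le]
      exact ⟨by linarith [ht.1], ht.2⟩
    calc |t| * |D i j| ≤ 1 * |D i j| := mul_le_mul_of_nonneg_right h2 (abs_nonneg _)
      _ = |D i j| := one_mul _
      _ ≤ B i j := hDB i j
  -- symmetry
  have hsum_symm : ∀ (c : Fin K → ℝ), (∑ k, c k • A k).IsSymm := by
    intro c
    rw [Matrix.IsSymm, Matrix.transpose_sum]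
    exact Finset.sum_congr rfl fun k _ => by rw [Matrix.transpose_smul, hA k]
  have hAs : Amid.IsSymm := by
    rw [hAmid, Matrix.IsSymm, Matrix.transpose_add, hA0, hsum_symm pc]
  have hDs : D.IsSymm := hsum_symm _
  -- conclude
  rw [hApD]
  exact stable_path hn Amid D hAs hDs hmid hinv
end

section
/- Let A(p) = A⁰ + Σ_{k=1}^K p_k·Aᵏ be a symmetric parametric interval matrix with affine-linear dependencies over the parameter box ∏_k [p̲_k, p̄_k]. Then A(p) is Schur stable for every p in the parameter box if and only if A(p) is Schur stable for every vertex p of the box, i.e., for every p with p_k ∈ {p̲_k, p̄_k} for all k. -/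
open Matrix Pointwise

variable {m : Type*} [Fintype m] [DecidableEq m]

omit [Fintype m] [DecidableEq m] in
private lemma symm_isHermitian {M : Matrix m m ℝ} (h : M.IsSymm) : M.IsHermitian := by
  rwa [Matrix.IsHermitian, Matrix.conjTranspose, Matrix.IsSymm] at *

private lemma posDef_of_eig_pos {M : Matrix m m ℝ} (hM : M.IsHermitian)
    (h : ∀ i, 0 < hM.eigenvalues i) : M.PosDef := by
  have hsd : M.PosSemidef := hM.posSemidef_iff_eigenvalues_nonneg.mpr (fun i => (h i).le)
  have hunit : IsUnit M := by
    rw [Matrix.isUnit_iff_isUnit_det]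
    have hd : (0:ℝ) < M.det := by
      rw [hM.det_eq_prod_eigenvalues]
      exact_mod_cast Finset.prod_pos fun i _ => h i
    exact hd.ne'.isUnit
  exact hM.posDef_iff_eigenvalues_pos.mpr h

private lemma exists_eigvec {M : Matrix m m ℝ} {μ : ℝ} (hμ : μ ∈ spectrum ℝ M) :
    ∃ v : m → ℝ, v ≠ 0 ∧ M *ᵥ v = μ • v := by
  rw [← AlgEquiv.spectrum_eq (Matrix.toLinAlgEquiv' (R := ℝ) (n := m)),
      ← Module.End.hasEigenvalue_iff_mem_spectrum] at hμ
  obtain ⟨v, hv⟩ := hμ.exists_hasEigenvector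
  exact ⟨v, hv.2, by simpa [Matrix.toLinAlgEquiv'_apply] using hv.apply_eq_smul⟩

private lemma quad_lt {M : Matrix m m ℝ} (hM : M.IsHermitian)
    (h : ∀ μ ∈ spectrum ℝ M, |μ| < 1) (x : m → ℝ) (hx : x ≠ 0) :
    |x ⬝ᵥ M *ᵥ x| < x ⬝ᵥ x := by
  have h1 : (1 - M).IsHermitian := Matrix.isHermitian_one.sub hM
  have h2 : (1 + M).IsHermitian := Matrix.isHermitian_one.add hM
  have hp1 : (1 - M).PosDef := by
    refine posDef_of_eig_pos h1 fun i => ?_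
    have ht := h1.eigenvalues_mem_spectrum_real i
    have hset : spectrum ℝ ((1:Matrix m m ℝ) - M) = ({1} : Set ℝ) - spectrum ℝ M := by
      simpa using (spectrum.singleton_sub_eq (R := ℝ) M 1).symm
    rw [hset, Set.mem_sub] at ht
    obtain ⟨a, ha, μ, hμ, hab⟩ := ht
    rw [Set.mem_singleton_iff] at ha
    subst ha
    have hs := abs_lt.mp (h μ hμ)
    rw [← hab]
    linarith
  have hp2 : (1 + M).PosDef := by
    refine posDef_of_eig_pos h2 fun i => ?_
    have ht := h2.eigenvalues_mem_spectrum_real i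
    have hset : spectrum ℝ ((1:Matrix m m ℝ) + M) = ({1} : Set ℝ) + spectrum ℝ M := by
      simpa using (spectrum.singleton_add_eq (R := ℝ) M 1).symm
    rw [hset, Set.mem_add] at ht
    obtain ⟨a, ha, μ, hμ, hab⟩ := ht
    rw [Set.mem_singleton_iff] at ha
    subst ha
    have hs := abs_lt.mp (h μ hμ)
    rw [← hab]
    linarith
  have g1 := hp1.dotProduct_mulVec_pos hx
  have g2 := hp2.dotProduct_mulVec_pos hx
  rw [Matrix.sub_mulVec, Matrix.one_mulVec, dotProduct_sub] at g1
  rw [Matrix.add_mulVec, Matrix.one_mulVec, dotProduct_add] at g2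
  simp only [star_trivial] at g1 g2
  rw [abs_lt]
  constructor <;> linarith

private lemma spec_of_quad {M : Matrix m m ℝ}
    (h : ∀ x : m → ℝ, x ≠ 0 → |x ⬝ᵥ M *ᵥ x| < x ⬝ᵥ x) :
    ∀ μ ∈ spectrum ℝ M, |μ| < 1 := by
  intro μ hμ
  obtain ⟨v, hv0, hv⟩ := exists_eigvec hμ
  have hvv : 0 < v ⬝ᵥ v := by
    have hne : v ⬝ᵥ v ≠ 0 := fun hc => hv0 (dotProduct_self_eq_zero.mp hc)
    have hnn : 0 ≤ v ⬝ᵥ v :=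
      Finset.sum_nonneg fun i _ => mul_self_nonneg (v i)
    exact lt_of_le_of_ne hnn (Ne.symm hne)
  have hq := h v hv0
  rw [hv, dotProduct_smul, smul_eq_mul, abs_mul, abs_of_pos hvv] at hq
  exact (mul_lt_iff_lt_one_left hvv).mp hq

omit [DecidableEq m] in
private lemma sum_mulVec' {ι : Type*} (s : Finset ι) (f : ι → Matrix m m ℝ) (x : m → ℝ) :
    (∑ k ∈ s, f k) *ᵥ x = ∑ k ∈ s, f k *ᵥ x := by
  ext i
  simp only [Matrix.mulVec, dotProduct, Finset.sum_apply, Matrix.sum_apply,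
    Finset.sum_mul]
  exact Finset.sum_comm

/-- A symmetric parametric interval matrix `A(p) = A⁰ + ∑ pₖ·Aᵏ` is Schur stable (all
eigenvalues in `(−1, 1)`) for every `p` in the parameter box `∏ₖ [p̲ₖ, p̄ₖ]` if and only if
it is Schur stable at every vertex of the box. -/
theorem stmt_6 {n K : ℕ}
    (A0 : Matrix (Fin n) (Fin n) ℝ) (A : Fin K → Matrix (Fin n) (Fin n) ℝ)
    (hA0 : A0.IsSymm) (hA : ∀ k, (A k).IsSymm)
    (plo phi : Fin K → ℝ) (hbox : ∀ k, plo k ≤ phi k) :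
    (∀ p : Fin K → ℝ, (∀ k, plo k ≤ p k ∧ p k ≤ phi k) →
        ∀ μ ∈ spectrum ℝ (A0 + ∑ k, p k • A k), |μ| < 1) ↔
    (∀ p : Fin K → ℝ, (∀ k, p k = plo k ∨ p k = phi k) →
        ∀ μ ∈ spectrum ℝ (A0 + ∑ k, p k • A k), |μ| < 1) := by
  classical
  constructor
  · intro h p hp
    exact h p fun k => by rcases hp k with h' | h' <;> simp [h', hbox k]
  · intro h p hp
    have hsym : ∀ q : Fin K → ℝ, (A0 + ∑ k, q k • A k).IsHermitian := by
      intro q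
      apply symm_isHermitian
      unfold Matrix.IsSymm
      rw [Matrix.transpose_add, Matrix.transpose_sum, hA0]
      congr 1
      exact Finset.sum_congr rfl fun k _ => by rw [Matrix.transpose_smul, hA k]
    apply spec_of_quad
    intro x hx
    have hquad : ∀ q : Fin K → ℝ,
        x ⬝ᵥ (A0 + ∑ k, q k • A k) *ᵥ x
          = x ⬝ᵥ A0 *ᵥ x + ∑ k, q k * (x ⬝ᵥ A k *ᵥ x) := by
      intro q
      rw [Matrix.add_mulVec, dotProduct_add, sum_mulVec']
      congr 1
      have hcomm : x ⬝ᵥ (∑ k, (q k • A k) *ᵥ x) = ∑ k, x ⬝ᵥ ((q k • A k) *ᵥ x) := by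
        simp only [dotProduct, Finset.sum_apply, Finset.mul_sum]
        exact Finset.sum_comm
      rw [hcomm]
      exact Finset.sum_congr rfl fun k _ => by
        rw [Matrix.smul_mulVec, dotProduct_smul, smul_eq_mul]
    set d : Fin K → ℝ := fun k => x ⬝ᵥ A k *ᵥ x with hd
    set qU : Fin K → ℝ := fun k => if 0 ≤ d k then phi k else plo k with hqU
    set qL : Fin K → ℝ := fun k => if 0 ≤ d k then plo k else phi k with hqL
    have hU := quad_lt (hsym qU) (h qU fun k => by by_cases hdk : 0 ≤ d k <;> simp [hqU, hdk]) x hx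
    have hL := quad_lt (hsym qL) (h qL fun k => by by_cases hdk : 0 ≤ d k <;> simp [hqL, hdk]) x hx
    rw [abs_lt] at hU hL
    rw [hquad p] at *
    rw [hquad qU] at hU
    rw [hquad qL] at hL
    have hsU : ∑ k, p k * d k ≤ ∑ k, qU k * d k := by
      refine Finset.sum_le_sum fun k _ => ?_
      by_cases hdk : 0 ≤ d k
      · simp only [hqU, if_pos hdk]
        exact mul_le_mul_of_nonneg_right (hp k).2 hdk
      · simp only [hqU, if_neg hdk]
        exact mul_le_mul_of_nonpos_right (hp k).1 (le_of_not_ge hdk)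
    have hsL : ∑ k, qL k * d k ≤ ∑ k, p k * d k := by
      refine Finset.sum_le_sum fun k _ => ?_
      by_cases hdk : 0 ≤ d k
      · simp only [hqL, if_pos hdk]
        exact mul_le_mul_of_nonneg_right (hp k).1 hdk
      · simp only [hqL, if_neg hdk]
        exact mul_le_mul_of_nonpos_right (hp k).2 (le_of_not_ge hdk)
    rw [abs_lt]
    constructor <;> linarith [hU.1, hU.2, hL.1, hL.2]
end

section
/- Let A(p) = A⁰ + Σ_{k=1}^K p_k·Aᵏ be a symmetric parametric interval matrix with affine-linear dependencies over the parameter box ∏_k [p̌_k − Δ_k, p̌_k + Δ_k] with midpoint p̌ and radius vector Δ. For any p' in the parameter box and any nonzero x ∈ ℝⁿ, setting s_k = sgn(xᵀAᵏx) and p_k = p̌_k + s_k·Δ_k (a vertex of the box), one has xᵀA(p')x ≤ xᵀA(p)x. Consequently, for every p' in the parameter box there exists a vertex p of the box such that the largest eigenvalue satisfies λ_max(A(p')) ≤ λ_max(A(p)). -/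
open Matrix

lemma quadform_eq {n K : ℕ} (A0 : Matrix (Fin n) (Fin n) ℝ) (A : Fin K → Matrix (Fin n) (Fin n) ℝ)
    (p : Fin K → ℝ) (x : Fin n → ℝ) :
    x ⬝ᵥ (A0 + ∑ k, p k • A k).mulVec x
      = x ⬝ᵥ A0.mulVec x + ∑ k, p k * (x ⬝ᵥ (A k).mulVec x) := by
  rw [add_mulVec, dotProduct_add]
  congr 1
  have : ∀ s : Finset (Fin K), x ⬝ᵥ (∑ k ∈ s, p k • A k) *ᵥ x
      = ∑ k ∈ s, p k * (x ⬝ᵥ (A k) *ᵥ x) := by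
    intro s
    induction s using Finset.induction with
    | empty => simp
    | insert a s h ih =>
      rw [Finset.sum_insert h, Finset.sum_insert h, add_mulVec, dotProduct_add, ih,
        smul_mulVec, dotProduct_smul, smul_eq_mul]
  exact this Finset.univ

lemma term_le {pc Δ p' c q : ℝ} (hΔ : 0 ≤ Δ) (h1 : pc - Δ ≤ p') (h2 : p' ≤ pc + Δ)
    (hq : q * c = pc * c + |c| * Δ) : p' * c ≤ q * c := by
  have habs : |p' - pc| ≤ Δ := abs_le.mpr ⟨by linarith, by linarith⟩
  have h3 : (p' - pc) * c ≤ |c| * Δ := by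
    calc (p' - pc) * c ≤ |(p' - pc) * c| := le_abs_self _
      _ = |p' - pc| * |c| := abs_mul _ _
      _ ≤ Δ * |c| := mul_le_mul_of_nonneg_right habs (abs_nonneg c)
      _ = |c| * Δ := mul_comm _ _
  rw [sub_mul] at h3
  linarith

lemma sign_mul_self' (c : ℝ) : Real.sign c * c = |c| := by
  rcases lt_trichotomy c 0 with h | h | h
  · rw [Real.sign_of_neg h, abs_of_neg h]; ring
  · simp [h]
  · rw [Real.sign_of_pos h, abs_of_pos h]; ring

lemma herm_of {n K : ℕ} (A0 : Matrix (Fin n) (Fin n) ℝ) (A : Fin K → Matrix (Fin n) (Fin n) ℝ)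
    (hA0 : A0.IsSymm) (hA : ∀ k, (A k).IsSymm) (p : Fin K → ℝ) :
    (A0 + ∑ k, p k • A k).IsHermitian := by
  rw [Matrix.IsHermitian, conjTranspose_eq_transpose_of_trivial]
  refine hA0.add ?_
  rw [Matrix.IsSymm, Matrix.transpose_sum]
  exact Finset.sum_congr rfl fun k _ => (hA k).smul (p k)

lemma rayleigh_upper {n : ℕ} [Nonempty (Fin n)] {M : Matrix (Fin n) (Fin n) ℝ} (hM : M.IsHermitian)
    (x : Fin n → ℝ) : x ⬝ᵥ M *ᵥ x ≤ sSup (spectrum ℝ M) * (x ⬝ᵥ x) := by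
  set L := sSup (spectrum ℝ M) with hL
  have hfin : (spectrum ℝ M).Finite := M.finite_real_spectrum
  have hub : ∀ μ ∈ spectrum ℝ M, μ ≤ L := fun μ hμ => le_csSup hfin.bddAbove hμ
  have hN : (algebraMap ℝ (Matrix (Fin n) (Fin n) ℝ) L - M).IsHermitian := by
    unfold Matrix.IsHermitian at *
    rw [conjTranspose_sub, hM, Algebra.algebraMap_eq_smul_one, conjTranspose_smul]
    simp
  have hpos : (algebraMap ℝ (Matrix (Fin n) (Fin n) ℝ) L - M).PosSemidef := by
    apply hN.posSemidef_iff_eigenvalues_nonneg.mpr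
    intro i
    have hmem := hN.eigenvalues_mem_spectrum_real i
    rw [← spectrum.singleton_sub_eq] at hmem
    obtain ⟨a, ha, b, hb, hab⟩ := Set.mem_sub.mp hmem
    simp only [Set.mem_singleton_iff] at ha
    have := hub b hb
    rw [← hab, ha, Pi.zero_apply]
    linarith
  have h0 : 0 ≤ x ⬝ᵥ (algebraMap ℝ (Matrix (Fin n) (Fin n) ℝ) L - M) *ᵥ x := by
    simpa using hpos.dotProduct_mulVec_nonneg x
  have hq : x ⬝ᵥ (algebraMap ℝ (Matrix (Fin n) (Fin n) ℝ) L - M) *ᵥ x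
      = L * (x ⬝ᵥ x) - x ⬝ᵥ M *ᵥ x := by
    rw [Algebra.algebraMap_eq_smul_one, sub_mulVec, dotProduct_sub, smul_mulVec,
      one_mulVec, dotProduct_smul, smul_eq_mul]
  linarith

lemma exists_max_eigvec {n : ℕ} [Nonempty (Fin n)] {M : Matrix (Fin n) (Fin n) ℝ}
    (hM : M.IsHermitian) :
    ∃ x : Fin n → ℝ, x ⬝ᵥ x = 1 ∧ x ⬝ᵥ M *ᵥ x = sSup (spectrum ℝ M) := by
  have hspec := hM.spectrum_real_eq_range_eigenvalues
  have hmem : sSup (spectrum ℝ M) ∈ spectrum ℝ M := by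
    apply Set.Nonempty.csSup_mem ?_ M.finite_real_spectrum
    rw [hspec]; exact Set.range_nonempty _
  rw [hspec] at hmem
  obtain ⟨i, hi⟩ := hmem
  refine ⟨⇑(hM.eigenvectorBasis i), ?_, ?_⟩
  · have h1 : ‖hM.eigenvectorBasis i‖ = 1 := hM.eigenvectorBasis.orthonormal.1 i
    have h2 := EuclideanSpace.inner_eq_star_dotProduct (𝕜 := ℝ)
      (hM.eigenvectorBasis i) (hM.eigenvectorBasis i)
    rw [real_inner_self_eq_norm_sq, h1] at h2
    simpa using h2.symm
  · rw [hM.mulVec_eigenvectorBasis i, dotProduct_smul, smul_eq_mul, hi]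
    have h1 : ‖hM.eigenvectorBasis i‖ = 1 := hM.eigenvectorBasis.orthonormal.1 i
    have h2 := EuclideanSpace.inner_eq_star_dotProduct (𝕜 := ℝ)
      (hM.eigenvectorBasis i) (hM.eigenvectorBasis i)
    rw [real_inner_self_eq_norm_sq, h1] at h2
    have : (⇑(hM.eigenvectorBasis i) : Fin n → ℝ) ⬝ᵥ ⇑(hM.eigenvectorBasis i) = 1 := by
      simpa using h2.symm
    rw [this, mul_one, hspec]

/-- For a symmetric parametric interval matrix `A(p) = A⁰ + ∑ pₖ·Aᵏ` over the box
`∏ₖ [p̌ₖ − Δₖ, p̌ₖ + Δₖ]`: for any `p'` in the box and any nonzero `x`, with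
`sₖ = sgn(xᵀAᵏx)` and `pₖ = p̌ₖ + sₖ·Δₖ` one has `xᵀA(p')x ≤ xᵀA(p)x`; consequently,
for every `p'` in the box there is a vertex `p` of the box with
`λ_max(A(p')) ≤ λ_max(A(p))`, where `λ_max` is the largest eigenvalue. -/
theorem stmt_7 {n K : ℕ}
    (A0 : Matrix (Fin n) (Fin n) ℝ) (A : Fin K → Matrix (Fin n) (Fin n) ℝ)
    (hA0 : A0.IsSymm) (hA : ∀ k, (A k).IsSymm)
    (pc Δ : Fin K → ℝ) (hΔ : ∀ k, 0 ≤ Δ k) :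
    (∀ p' : Fin K → ℝ, (∀ k, pc k - Δ k ≤ p' k ∧ p' k ≤ pc k + Δ k) →
      ∀ x : Fin n → ℝ, x ≠ 0 →
        x ⬝ᵥ (A0 + ∑ k, p' k • A k).mulVec x ≤
          x ⬝ᵥ (A0 + ∑ k,
            (pc k + Real.sign (x ⬝ᵥ (A k).mulVec x) * Δ k) • A k).mulVec x) ∧
    (∀ p' : Fin K → ℝ, (∀ k, pc k - Δ k ≤ p' k ∧ p' k ≤ pc k + Δ k) →
      ∃ p : Fin K → ℝ, (∀ k, p k = pc k - Δ k ∨ p k = pc k + Δ k) ∧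
        sSup (spectrum ℝ (A0 + ∑ k, p' k • A k)) ≤
          sSup (spectrum ℝ (A0 + ∑ k, p k • A k))) := by
  constructor
  · intro p' hp' x _
    rw [quadform_eq, quadform_eq]
    refine add_le_add_right (Finset.sum_le_sum fun k _ => ?_) _
    refine term_le (hΔ k) (hp' k).1 (hp' k).2 ?_
    have hs := sign_mul_self' (x ⬝ᵥ (A k).mulVec x)
    linear_combination (Δ k) * hs
  · intro p' hp'
    rcases Nat.eq_zero_or_pos n with hn | hn
    · subst hn
      refine ⟨fun k => pc k + Δ k, fun k => Or.inr rfl, ?_⟩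
      have hempty : ∀ M : Matrix (Fin 0) (Fin 0) ℝ, spectrum ℝ M = ∅ := by
        intro M
        have hM : M.IsHermitian := Subsingleton.elim _ _
        rw [hM.spectrum_real_eq_range_eigenvalues, Set.range_eq_empty]
      rw [hempty, hempty]
    · haveI : Nonempty (Fin n) := ⟨⟨0, hn⟩⟩
      have hM' := herm_of A0 A hA0 hA p'
      obtain ⟨x, hx1, hx2⟩ := exists_max_eigvec hM'
      set q : Fin K → ℝ := fun k =>
        if 0 ≤ x ⬝ᵥ (A k).mulVec x then pc k + Δ k else pc k - Δ k with hqdef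
      refine ⟨q, fun k => ?_, ?_⟩
      · by_cases h : 0 ≤ x ⬝ᵥ (A k).mulVec x
        · exact Or.inr (by simp [hqdef, h])
        · exact Or.inl (by simp [hqdef, h])
      · have hQ := herm_of A0 A hA0 hA q
        have step1 : x ⬝ᵥ (A0 + ∑ k, p' k • A k).mulVec x
            ≤ x ⬝ᵥ (A0 + ∑ k, q k • A k).mulVec x := by
          rw [quadform_eq, quadform_eq]
          refine add_le_add_right (Finset.sum_le_sum fun k _ => ?_) _
          refine term_le (hΔ k) (hp' k).1 (hp' k).2 ?_
          by_cases h : 0 ≤ x ⬝ᵥ (A k).mulVec x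
          · rw [hqdef]
            simp only [h, if_pos]
            rw [abs_of_nonneg h]; ring
          · rw [hqdef]
            simp only [h, if_neg, if_false]
            rw [abs_of_neg (lt_of_not_ge h)]; ring
        have step2 := rayleigh_upper hQ x
        rw [hx1, mul_one] at step2
        linarith
end

section
/- Let A(p) = A⁰ + Σ_{k=1}^K p_k·Aᵏ be a symmetric parametric interval matrix with affine-linear dependencies over the parameter box ∏_k [p̌_k − Δ_k, p̌_k + Δ_k] with midpoint p̌ and radius vector Δ. For every p' in the parameter box there exists a vertex p of the box (with p_k ∈ {p̌_k − Δ_k, p̌_k + Δ_k} for all k) such that the smallest eigenvalue satisfies λ_min(A(p')) ≥ λ_min(A(p)). -/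
open Matrix

open Pointwise

lemma my_smul_psd {n : ℕ} {M : Matrix (Fin n) (Fin n) ℝ} (hM : M.PosSemidef)
    {c : ℝ} (hc : 0 ≤ c) : (c • M).PosSemidef := by
  constructor
  · unfold Matrix.IsHermitian
    rw [conjTranspose_smul, hM.1]
    simp
  · intro x
    exact (PosSemidef.smul hM hc).2 x

lemma my_psd_iff {n : ℕ} {M : Matrix (Fin n) (Fin n) ℝ} (hM : M.IsHermitian) (c : ℝ) :
    (M - c • 1).PosSemidef ↔ ∀ μ ∈ spectrum ℝ M, c ≤ μ := by
  have hH : (M - c • (1 : Matrix (Fin n) (Fin n) ℝ)).IsHermitian := by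
    apply hM.sub
    unfold Matrix.IsHermitian
    rw [conjTranspose_smul, conjTranspose_one]
    simp
  have hspec : spectrum ℝ (M - c • (1 : Matrix (Fin n) (Fin n) ℝ))
      = spectrum ℝ M - {c} := by
    rw [show (c • (1 : Matrix (Fin n) (Fin n) ℝ)) = algebraMap ℝ _ c from (Algebra.algebraMap_eq_smul_one c).symm,
      ← spectrum.sub_singleton_eq]
  constructor
  · intro hpsd μ hμ
    have : μ - c ∈ spectrum ℝ (M - c • (1 : Matrix (Fin n) (Fin n) ℝ)) := by
      rw [hspec]
      exact Set.sub_mem_sub hμ rfl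
    rw [hH.spectrum_real_eq_range_eigenvalues] at this
    obtain ⟨i, hi⟩ := this
    linarith [hpsd.eigenvalues_nonneg i, hi]
  · intro h
    rw [hH.posSemidef_iff_eigenvalues_nonneg]
    intro i
    have := hH.eigenvalues_mem_spectrum_real i
    rw [hspec] at this
    obtain ⟨μ, hμ, d, hd, hμd⟩ := this
    simp only [Set.mem_singleton_iff] at hd
    subst hd
    have hμd' : μ - d = hH.eigenvalues i := hμd
    rw [← hμd']
    have := h μ hμ
    rw [Pi.zero_apply]
    linarith

lemma my_herm_smul {n : ℕ} {M : Matrix (Fin n) (Fin n) ℝ} (hM : M.IsHermitian) (c : ℝ) :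
    (c • M).IsHermitian := by
  unfold Matrix.IsHermitian
  rw [conjTranspose_smul, hM]
  simp

lemma my_concave {n : ℕ} {B C : Matrix (Fin n) (Fin n) ℝ} (hB : B.IsHermitian)
    (hC : C.IsHermitian) {t : ℝ} (ht0 : 0 ≤ t) (ht1 : t ≤ 1) :
    min (sInf (spectrum ℝ B)) (sInf (spectrum ℝ C)) ≤
      sInf (spectrum ℝ ((1 - t) • B + t • C)) := by
  rcases Nat.eq_zero_or_pos n with h0 | hn
  · subst h0
    have : (1 - t) • B + t • C = B := by ext i j; exact i.elim0
    rw [this]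
    exact min_le_left _ _
  set c := min (sInf (spectrum ℝ B)) (sInf (spectrum ℝ C)) with hc
  have hbddB : BddBelow (spectrum ℝ B) := (Matrix.finite_real_spectrum (A := B)).bddBelow
  have hbddC : BddBelow (spectrum ℝ C) := (Matrix.finite_real_spectrum (A := C)).bddBelow
  have hBpsd : (B - c • 1).PosSemidef := by
    rw [my_psd_iff hB]
    intro μ hμ
    exact le_trans (min_le_left _ _) (csInf_le hbddB hμ)
  have hCpsd : (C - c • 1).PosSemidef := by
    rw [my_psd_iff hC]
    intro μ hμ
    exact le_trans (min_le_right _ _) (csInf_le hbddC hμ)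
  have hMh : ((1 - t) • B + t • C).IsHermitian :=
    (my_herm_smul hB (1 - t)).add (my_herm_smul hC t)
  have hMpsd : ((1 - t) • B + t • C - c • 1).PosSemidef := by
    have heq : (1 - t) • B + t • C - c • (1 : Matrix (Fin n) (Fin n) ℝ)
        = (1 - t) • (B - c • 1) + t • (C - c • 1) := by module
    rw [heq]
    exact (my_smul_psd hBpsd (by linarith)).add (my_smul_psd hCpsd ht0)
  rw [my_psd_iff hMh] at hMpsd
  have hne : (spectrum ℝ ((1 - t) • B + t • C)).Nonempty :=
    ⟨_, hMh.eigenvalues_mem_spectrum_real ⟨0, hn⟩⟩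
  exact le_csInf hne hMpsd

/-- For a symmetric parametric interval matrix `A(p) = A⁰ + ∑ pₖ·Aᵏ` over the box
`∏ₖ [p̌ₖ − Δₖ, p̌ₖ + Δₖ]`, for every `p'` in the box there exists a vertex `p` of the box
such that `λ_min(A(p')) ≥ λ_min(A(p))`, where `λ_min` is the smallest eigenvalue. -/
theorem stmt_8 {n K : ℕ}
    (A0 : Matrix (Fin n) (Fin n) ℝ) (A : Fin K → Matrix (Fin n) (Fin n) ℝ)
    (hA0 : A0.IsSymm) (hA : ∀ k, (A k).IsSymm)
    (pc Δ : Fin K → ℝ) (hΔ : ∀ k, 0 ≤ Δ k) :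
    ∀ p' : Fin K → ℝ, (∀ k, pc k - Δ k ≤ p' k ∧ p' k ≤ pc k + Δ k) →
      ∃ p : Fin K → ℝ, (∀ k, p k = pc k - Δ k ∨ p k = pc k + Δ k) ∧
        sInf (spectrum ℝ (A0 + ∑ k, p k • A k)) ≤
          sInf (spectrum ℝ (A0 + ∑ k, p' k • A k)) := by
  intro p' hp'
  have herm : ∀ q : Fin K → ℝ, (A0 + ∑ j, q j • A j).IsHermitian := by
    intro q
    have h0 : A0.IsHermitian := by
      rw [Matrix.IsHermitian, conjTranspose_eq_transpose_of_trivial]; exact hA0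
    refine h0.add ?_
    rw [Matrix.IsHermitian, conjTranspose_sum]
    refine Finset.sum_congr rfl fun j _ => ?_
    rw [conjTranspose_smul, conjTranspose_eq_transpose_of_trivial,
      show (A j)ᵀ = A j from hA j, star_trivial]
  suffices h : ∀ s : Finset (Fin K), ∃ p : Fin K → ℝ,
      (∀ k ∈ s, p k = pc k - Δ k ∨ p k = pc k + Δ k) ∧ (∀ k ∉ s, p k = p' k) ∧
      sInf (spectrum ℝ (A0 + ∑ k, p k • A k)) ≤
        sInf (spectrum ℝ (A0 + ∑ k, p' k • A k)) by
    obtain ⟨p, h1, _, h3⟩ := h Finset.univ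
    exact ⟨p, fun k => h1 k (Finset.mem_univ k), h3⟩
  intro s
  induction s using Finset.induction with
  | empty => exact ⟨p', fun k hk => absurd hk (Finset.notMem_empty k),
      fun _ _ => rfl, le_refl _⟩
  | @insert k s hk ih =>
    obtain ⟨p, h1, h2, h3⟩ := ih
    have hpk : p k = p' k := h2 k hk
    set a := pc k - Δ k with ha
    set b := pc k + Δ k with hb
    have hab : a ≤ p k ∧ p k ≤ b := by rw [hpk]; exact hp' k
    -- find t ∈ [0,1] with p k = (1-t)*a + t*b
    obtain ⟨t, ht0, ht1, htc⟩ : ∃ t : ℝ, 0 ≤ t ∧ t ≤ 1 ∧ p k = (1 - t) * a + t * b := by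
      rcases eq_or_lt_of_le (hΔ k) with hΔ0 | hΔpos
      · refine ⟨0, le_refl _, zero_le_one, ?_⟩
        have : a = b := by rw [ha, hb, ← hΔ0]; ring
        have : a = p k := le_antisymm hab.1 (this ▸ hab.2)
        rw [← this]; ring
      · refine ⟨(p k - a) / (b - a), ?_, ?_, ?_⟩
        · apply div_nonneg (by linarith [hab.1]) (by rw [ha, hb]; linarith)
        · rw [div_le_one (by rw [ha, hb]; linarith)]; linarith [hab.2]
        · have hba : b - a ≠ 0 := by rw [ha, hb]; intro h; simp at h; linarith
          field_simp
          ring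
    -- affine decomposition of the sum
    have key : ∀ x : ℝ, (∑ j, (Function.update p k x) j • A j)
        = x • A k + ∑ j ∈ Finset.univ \ {k}, p j • A j := by
      intro x
      have hfn : (fun j => (Function.update p k x) j • A j)
          = Function.update (fun j => p j • A j) k (x • A k) := by
        funext j
        by_cases hj : j = k
        · subst hj; simp
        · simp [Function.update_of_ne hj]
      rw [hfn, Finset.sum_update_of_mem (Finset.mem_univ k)]
    have hbase : (∑ j, p j • A j)
        = p k • A k + ∑ j ∈ Finset.univ \ {k}, p j • A j := by
      have h := key (p k)
      rwa [Function.update_eq_self] at h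
    have hcomb : A0 + ∑ j, p j • A j
        = (1 - t) • (A0 + ∑ j, (Function.update p k a) j • A j)
          + t • (A0 + ∑ j, (Function.update p k b) j • A j) := by
      rw [key a, key b, hbase, htc]
      match_scalars <;> ring
    have hmin := my_concave (herm (Function.update p k a))
      (herm (Function.update p k b)) ht0 ht1
    rw [← hcomb] at hmin
    by_cases hcase : sInf (spectrum ℝ (A0 + ∑ j, (Function.update p k a) j • A j))
        ≤ sInf (spectrum ℝ (A0 + ∑ j, (Function.update p k b) j • A j))
    · refine ⟨Function.update p k a, ?_, ?_, ?_⟩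
      · intro j hj
        rcases Finset.mem_insert.mp hj with hj | hj
        · subst hj; left; simp [ha]
        · have hjk : j ≠ k := fun h => hk (h ▸ hj)
          rw [Function.update_of_ne hjk]; exact h1 j hj
      · intro j hj
        have hjk : j ≠ k := by
          intro h; exact hj (h ▸ Finset.mem_insert_self k s)
        rw [Function.update_of_ne hjk]
        exact h2 j fun h => hj (Finset.mem_insert_of_mem h)
      · refine le_trans ?_ h3
        rw [min_eq_left hcase] at hmin
        exact hmin
    · refine ⟨Function.update p k b, ?_, ?_, ?_⟩
      · intro j hj
        rcases Finset.mem_insert.mp hj with hj | hj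
        · subst hj; right; simp [hb]
        · have hjk : j ≠ k := fun h => hk (h ▸ hj)
          rw [Function.update_of_ne hjk]; exact h1 j hj
      · intro j hj
        have hjk : j ≠ k := by
          intro h; exact hj (h ▸ Finset.mem_insert_self k s)
        rw [Function.update_of_ne hjk]
        exact h2 j fun h => hj (Finset.mem_insert_of_mem h)
      · refine le_trans ?_ h3
        rw [min_eq_right (le_of_not_ge hcase)] at hmin
        exact hmin
end

section
/- Let A(p) = A⁰ + Σ_{k=1}^K p_k·Aᵏ be a symmetric parametric interval matrix with affine-linear dependencies over the parameter box ∏_k [p̌_k − Δ_k, p̌_k + Δ_k] with midpoint p̌ and radius vector Δ, and suppose the midpoint matrix A(p̌) is stable. Define the radius of stability s = inf{ r ≥ 0 : there exists p ∈ ∏_k [p̌_k − r·Δ_k, p̌_k + r·Δ_k] such that A(p) is not stable } and the radius of regularity r₀ = inf{ r ≥ 0 : there exists p ∈ ∏_k [p̌_k − r·Δ_k, p̌_k + r·Δ_k] such that A(p) is singular }. Then s = r₀. -/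
open Matrix

variable {n : ℕ}

private lemma herm_of_symm {M : Matrix (Fin n) (Fin n) ℝ} (h : M.IsSymm) : M.IsHermitian := by
  rwa [Matrix.IsHermitian, Matrix.conjTranspose_eq_transpose_of_trivial]

private lemma cont_quad (M : Matrix (Fin n) (Fin n) ℝ) :
    Continuous (fun v : Fin n → ℝ => v ⬝ᵥ M *ᵥ v) := by
  simp only [dotProduct, mulVec]
  exact continuous_finset_sum _ fun i _ =>
    (continuous_apply i).mul (continuous_finset_sum _ fun j _ =>
      (continuous_const.mul (continuous_apply j)))

private lemma cont_dot : Continuous (fun v : Fin n → ℝ => v ⬝ᵥ v) := by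
  simp only [dotProduct]
  exact continuous_finset_sum _ fun i _ => (continuous_apply i).mul (continuous_apply i)

private lemma eig_vec {M : Matrix (Fin n) (Fin n) ℝ} (hM : M.IsHermitian) (i : Fin n) :
    ∃ x : Fin n → ℝ, x ≠ 0 ∧ 0 ≤ x ⬝ᵥ x ∧ x ⬝ᵥ M *ᵥ x = hM.eigenvalues i * (x ⬝ᵥ x) := by
  refine ⟨WithLp.equiv 2 _ (hM.eigenvectorBasis i), ?_, ?_, ?_⟩
  · have h := hM.eigenvectorBasis.orthonormal.ne_zero i
    exact fun hc => h ((WithLp.ofLp_eq_zero (p := 2)).mp hc)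
  · exact Finset.sum_nonneg fun j _ => mul_self_nonneg _
  · change (hM.eigenvectorBasis i).ofLp ⬝ᵥ M *ᵥ (hM.eigenvectorBasis i).ofLp = _
    rw [hM.mulVec_eigenvectorBasis, dotProduct_smul]
    simp [smul_eq_mul]

private lemma stable_iff_negdef {M : Matrix (Fin n) (Fin n) ℝ} (hM : M.IsHermitian) :
    (∀ μ ∈ spectrum ℝ M, μ < 0) ↔ ∀ x : Fin n → ℝ, x ≠ 0 → x ⬝ᵥ M *ᵥ x < 0 := by
  constructor
  · intro h x hx
    have hunit : IsUnit M := by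
      by_contra hu
      exact absurd (h 0 (((spectrum.zero_mem_iff (R := ℝ)).mpr hu))) (lt_irrefl 0)
    have hdet : M.det ≠ 0 := ((Matrix.isUnit_iff_isUnit_det M).mp hunit).ne_zero
    have hps : (-M).PosSemidef := by
      refine hM.neg.posSemidef_iff_eigenvalues_nonneg.mpr fun i => ?_
      have hmem := hM.neg.eigenvalues_mem_spectrum_real i
      rw [← spectrum.neg_eq, Set.mem_neg] at hmem
      have := h _ hmem
      simp only [Pi.zero_apply]
      linarith
    have hstar : star x = x := funext fun j => rfl
    have h1 : 0 ≤ star x ⬝ᵥ (-M) *ᵥ x := hps.dotProduct_mulVec_nonneg x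
    rw [hstar, neg_mulVec, dotProduct_neg] at h1
    rcases lt_or_eq_of_le (by linarith : x ⬝ᵥ M *ᵥ x ≤ 0) with h2 | h2
    · exact h2
    · exfalso
      have h3 : (-M) *ᵥ x = 0 := by
        rw [← hps.dotProduct_mulVec_zero_iff x, hstar, neg_mulVec, dotProduct_neg, h2, neg_zero]
      rw [neg_mulVec, neg_eq_zero] at h3
      exact hdet (Matrix.exists_mulVec_eq_zero_iff.mp ⟨x, hx, h3⟩)
  · intro h μ hμ
    rw [hM.spectrum_real_eq_range_eigenvalues] at hμ
    obtain ⟨i, rfl⟩ := hμ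
    obtain ⟨x, hx0, hxx, hq⟩ := eig_vec hM i
    have := h x hx0
    nlinarith

private lemma stable_open {M N : Matrix (Fin n) (Fin n) ℝ} (hM : M.IsHermitian)
    (hN : N.IsHermitian) (h : ∀ μ ∈ spectrum ℝ M, μ < 0) :
    ∃ δ > 0, ∀ t : ℝ, |t| < δ → ∀ μ ∈ spectrum ℝ (M + t • N), μ < 0 := by
  rcases Nat.eq_zero_or_pos n with hn | hn
  · subst hn
    haveI : Subsingleton (Matrix (Fin 0) (Fin 0) ℝ) := ⟨fun a b => by ext i j; exact i.elim0⟩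
    refine ⟨1, one_pos, fun t _ μ hμ => absurd hμ ?_⟩
    exact spectrum.notMem_iff.mpr (isUnit_of_subsingleton _)
  · set S : Set (Fin n → ℝ) := {v | v ⬝ᵥ v = 1} with hS
    have hSc : IsCompact S := by
      apply Metric.isCompact_of_isClosed_isBounded
      · exact isClosed_singleton.preimage cont_dot
      · refine Metric.isBounded_closedBall (x := (0 : Fin n → ℝ)) (r := 1) |>.subset ?_
        intro v hv
        rw [Metric.mem_closedBall, dist_zero_right]
        refine (pi_norm_le_iff_of_nonneg zero_le_one).mpr fun i => ?_
        have h1 : v i * v i ≤ 1 := by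
          have := Finset.single_le_sum (f := fun j => v j * v j)
            (fun j _ => mul_self_nonneg _) (Finset.mem_univ i)
          rw [show ∑ j, v j * v j = 1 from hv] at this
          exact this
        rw [Real.norm_eq_abs]
        nlinarith [abs_nonneg (v i), abs_mul_abs_self (v i)]
    have hSne : S.Nonempty := by
      refine ⟨Pi.single ⟨0, hn⟩ 1, ?_⟩
      simp [hS, dotProduct, Pi.single_apply]
    have hnd := (stable_iff_negdef hM).mp h
    obtain ⟨x₀, hx₀S, hmax⟩ := hSc.exists_isMaxOn hSne (cont_quad M).continuousOn
    obtain ⟨x₁, hx₁S, hCmax⟩ := hSc.exists_isMaxOn hSne (cont_quad N).abs.continuousOn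
    set ε : ℝ := -(x₀ ⬝ᵥ M *ᵥ x₀) with hε
    set C : ℝ := |x₁ ⬝ᵥ N *ᵥ x₁| with hC
    have hx₀ne : x₀ ≠ 0 := by
      intro h0
      rw [h0] at hx₀S
      simp [hS, dotProduct] at hx₀S
    have hεpos : 0 < ε := by
      have := hnd x₀ hx₀ne
      simp only [hε]; linarith
    have hCnn : 0 ≤ C := abs_nonneg _
    refine ⟨ε / (C + 1), by positivity, fun t ht => ?_⟩
    have hermMt : (M + t • N).IsHermitian := by
      refine hM.add ?_
      show (t • N)ᴴ = t • N
      rw [Matrix.conjTranspose_smul, star_trivial, hN]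
    refine (stable_iff_negdef hermMt).mpr fun x hx => ?_
    have hxx : 0 < x ⬝ᵥ x := by
      obtain ⟨i, hi⟩ : ∃ i, x i ≠ 0 := by
        by_contra hc; push_neg at hc; exact hx (funext hc)
      exact Finset.sum_pos' (fun j _ => mul_self_nonneg _)
        ⟨i, Finset.mem_univ i, mul_self_pos.mpr hi⟩
    set c : ℝ := Real.sqrt (x ⬝ᵥ x) with hc
    have hcpos : 0 < c := Real.sqrt_pos.mpr hxx
    have hc2 : c * c = x ⬝ᵥ x := Real.mul_self_sqrt hxx.le
    set u : Fin n → ℝ := c⁻¹ • x with hu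
    have huS : u ∈ S := by
      show u ⬝ᵥ u = 1
      rw [hu, smul_dotProduct, dotProduct_smul, smul_eq_mul, smul_eq_mul, ← hc2]
      field_simp
    have hxu : x = c • u := by
      rw [hu, smul_smul, mul_inv_cancel₀ hcpos.ne', one_smul]
    have hqsplit : ∀ v : Fin n → ℝ, v ⬝ᵥ (M + t • N) *ᵥ v = v ⬝ᵥ M *ᵥ v + t * (v ⬝ᵥ N *ᵥ v) := by
      intro v
      rw [add_mulVec, dotProduct_add, smul_mulVec, dotProduct_smul, smul_eq_mul]
    have hfu : u ⬝ᵥ M *ᵥ u ≤ -ε := by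
      have h9 := hmax huS
      simp only [hε, neg_neg]
      exact h9
    have hgu : |u ⬝ᵥ N *ᵥ u| ≤ C := hCmax huS
    have h1 : t * (u ⬝ᵥ N *ᵥ u) ≤ |t| * C := by
      calc t * (u ⬝ᵥ N *ᵥ u) ≤ |t * (u ⬝ᵥ N *ᵥ u)| := le_abs_self _
        _ = |t| * |u ⬝ᵥ N *ᵥ u| := abs_mul _ _
        _ ≤ |t| * C := mul_le_mul_of_nonneg_left hgu (abs_nonneg t)
    have h2 : |t| * C < ε := by
      have h3 : |t| * C ≤ |t| * (C + 1) := by nlinarith [abs_nonneg t]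
      have h4 : |t| * (C + 1) < (ε / (C + 1)) * (C + 1) :=
        mul_lt_mul_of_pos_right ht (by positivity)
      have h5 : (ε / (C + 1)) * (C + 1) = ε := by field_simp
      linarith
    have hqu : u ⬝ᵥ (M + t • N) *ᵥ u < 0 := by
      rw [hqsplit u]; linarith
    calc x ⬝ᵥ (M + t • N) *ᵥ x
        = c * (c * (u ⬝ᵥ (M + t • N) *ᵥ u)) := by
          rw [hxu, smul_dotProduct, mulVec_smul, dotProduct_smul, smul_eq_mul, smul_eq_mul]
      _ < 0 := by nlinarith


/-- For a symmetric parametric interval matrix `A(p) = A⁰ + ∑ pₖ·Aᵏ` whose midpoint matrix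
`A(p̌)` is stable (all eigenvalues strictly negative), the radius of stability (the smallest
`r ≥ 0` for which the `r`-scaled box `∏ₖ [p̌ₖ − r·Δₖ, p̌ₖ + r·Δₖ]` contains a parameter `p`
with `A(p)` unstable) equals the radius of regularity (the smallest `r ≥ 0` for which the
`r`-scaled box contains a parameter `p` with `A(p)` singular). -/
theorem stmt_11 {n K : ℕ}
    (A0 : Matrix (Fin n) (Fin n) ℝ) (A : Fin K → Matrix (Fin n) (Fin n) ℝ)
    (hA0 : A0.IsSymm) (hA : ∀ k, (A k).IsSymm)
    (pc Δ : Fin K → ℝ) (hΔ : ∀ k, 0 ≤ Δ k)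
    (hmid : ∀ μ ∈ spectrum ℝ (A0 + ∑ k, pc k • A k), μ < 0) :
    sInf {r : ℝ | 0 ≤ r ∧ ∃ p : Fin K → ℝ,
        (∀ k, pc k - r * Δ k ≤ p k ∧ p k ≤ pc k + r * Δ k) ∧
        ¬ (∀ μ ∈ spectrum ℝ (A0 + ∑ k, p k • A k), μ < 0)} =
    sInf {r : ℝ | 0 ≤ r ∧ ∃ p : Fin K → ℝ,
        (∀ k, pc k - r * Δ k ≤ p k ∧ p k ≤ pc k + r * Δ k) ∧
        (A0 + ∑ k, p k • A k).det = 0} := by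
  have hermK : ∀ q : Fin K → ℝ, (A0 + ∑ k, q k • A k).IsHermitian := by
    intro q
    show (A0 + ∑ k, q k • A k)ᴴ = _
    rw [conjTranspose_add, conjTranspose_sum, herm_of_symm hA0]
    congr 1
    exact Finset.sum_congr rfl fun k _ => by
      rw [Matrix.conjTranspose_smul, star_trivial, herm_of_symm (hA k)]
  have hsets : {r : ℝ | 0 ≤ r ∧ ∃ p : Fin K → ℝ,
        (∀ k, pc k - r * Δ k ≤ p k ∧ p k ≤ pc k + r * Δ k) ∧
        ¬ (∀ μ ∈ spectrum ℝ (A0 + ∑ k, p k • A k), μ < 0)} =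
      {r : ℝ | 0 ≤ r ∧ ∃ p : Fin K → ℝ,
        (∀ k, pc k - r * Δ k ≤ p k ∧ p k ≤ pc k + r * Δ k) ∧
        (A0 + ∑ k, p k • A k).det = 0} := by
    ext r
    simp only [Set.mem_setOf_eq]
    constructor
    · rintro ⟨hr, p, hbox, hunst⟩
      refine ⟨hr, ?_⟩
      set Mc := A0 + ∑ k, pc k • A k with hMc
      set N := ∑ k, (p k - pc k) • A k with hN
      have hAt : ∀ t : ℝ, A0 + ∑ k, (pc k + t * (p k - pc k)) • A k = Mc + t • N := by
        intro t
        rw [hMc, hN, Finset.smul_sum]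
        simp only [add_smul, Finset.sum_add_distrib, smul_smul, add_assoc]
      have hermN : N.IsHermitian := by
        show Nᴴ = N
        rw [hN, conjTranspose_sum]
        exact Finset.sum_congr rfl fun k _ => by
          rw [Matrix.conjTranspose_smul, star_trivial, herm_of_symm (hA k)]
      have hermMt : ∀ t : ℝ, (Mc + t • N).IsHermitian := fun t => hAt t ▸ hermK _
      set Stable : ℝ → Prop := fun t => ∀ μ ∈ spectrum ℝ (Mc + t • N), μ < 0 with hStable
      have hst0 : Stable 0 := by
        intro μ hμ
        rw [zero_smul, add_zero] at hμ
        exact hmid μ hμ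
      have h1N : A0 + ∑ k, p k • A k = Mc + (1 : ℝ) • N := by
        rw [← hAt 1]; simp
      have hst1 : ¬ Stable 1 := by rwa [h1N] at hunst
      set U : Set ℝ := {t : ℝ | t ∈ Set.Icc (0 : ℝ) 1 ∧ ¬ Stable t} with hU
      have hU1 : (1 : ℝ) ∈ U := ⟨⟨zero_le_one, le_refl 1⟩, hst1⟩
      have hUne : U.Nonempty := ⟨1, hU1⟩
      have hUbd : BddBelow U := ⟨0, fun u hu => hu.1.1⟩
      set ts : ℝ := sInf U with hts
      have ht0 : 0 ≤ ts := le_csInf hUne fun u hu => hu.1.1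
      have ht1 : ts ≤ 1 := csInf_le hUbd hU1
      have hbelow : ∀ t, 0 ≤ t → t < ts → Stable t := by
        intro t h0t hlt
        by_contra hns
        exact absurd (csInf_le hUbd ⟨⟨h0t, hlt.le.trans ht1⟩, hns⟩) (not_le.mpr hlt)
      have hrw : ∀ s : ℝ, (Mc + ts • N) + s • N = Mc + (ts + s) • N := fun s => by
        rw [add_assoc, ← add_smul]
      have hUst : ¬ Stable ts := by
        intro hst
        obtain ⟨δ, hδ, hopen⟩ := stable_open (hermMt ts) hermN hst
        obtain ⟨u, huU, hult⟩ := exists_lt_of_csInf_lt hUne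
          (show sInf U < ts + δ by rw [← hts]; linarith)
        have hut : ts ≤ u := csInf_le hUbd huU
        refine huU.2 fun μ hμ => ?_
        refine hopen (u - ts) (by rw [abs_of_nonneg (by linarith)]; linarith) μ ?_
        rw [hrw, show ts + (u - ts) = u from by ring]
        exact hμ
      have htpos : 0 < ts := lt_of_le_of_ne ht0 (fun h => hUst (h ▸ hst0))
      have hb : ∀ x : Fin n → ℝ, x ⬝ᵥ (Mc + ts • N) *ᵥ x ≤ 0 := by
        intro x
        by_contra hposq
        push_neg at hposq
        have hx0 : x ≠ 0 := by
          rintro rfl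
          rw [zero_dotProduct] at hposq
          exact lt_irrefl 0 hposq
        have hermMc : Mc.IsHermitian := by rw [hMc]; exact hermK pc
        have ha : x ⬝ᵥ Mc *ᵥ x < 0 := (stable_iff_negdef hermMc).mp hmid x hx0
        have hq : ∀ t : ℝ, x ⬝ᵥ (Mc + t • N) *ᵥ x
            = x ⬝ᵥ Mc *ᵥ x + t * (x ⬝ᵥ N *ᵥ x) := fun t => by
          rw [add_mulVec, dotProduct_add, smul_mulVec, dotProduct_smul, smul_eq_mul]
        set a : ℝ := x ⬝ᵥ Mc *ᵥ x
        set b : ℝ := x ⬝ᵥ N *ᵥ x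
        rw [hq] at hposq
        have hbpos : 0 < b := by
          by_contra hble
          push_neg at hble
          nlinarith [mul_nonneg htpos.le (neg_nonneg.mpr hble)]
        have hs1 : -a / b < ts := by
          rw [div_lt_iff₀ hbpos]; linarith
        have hs0 : 0 < -a / b := div_pos (neg_pos.mpr ha) hbpos
        set s : ℝ := (-a / b + ts) / 2 with hs
        have hstabs := hbelow s (by rw [hs]; linarith) (by rw [hs]; linarith)
        have hneg := (stable_iff_negdef (hermMt s)).mp hstabs x hx0
        rw [hq] at hneg
        have hgt : -a / b < s := by rw [hs]; linarith
        nlinarith [mul_lt_mul_of_pos_right hgt hbpos, div_mul_cancel₀ (-a) hbpos.ne']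
      have hnotneg : ¬ ∀ x : Fin n → ℝ, x ≠ 0 → x ⬝ᵥ (Mc + ts • N) *ᵥ x < 0 :=
        fun hnd => hUst ((stable_iff_negdef (hermMt ts)).mpr hnd)
      push_neg at hnotneg
      obtain ⟨x, hx0, hxq⟩ := hnotneg
      have hq0 : x ⬝ᵥ (Mc + ts • N) *ᵥ x = 0 := le_antisymm (hb x) hxq
      have hps : (-(Mc + ts • N)).PosSemidef := by
        refine .of_dotProduct_mulVec_nonneg (hermMt ts).neg fun y => ?_
        have := hb y
        rw [show star y = y from funext fun j => rfl, neg_mulVec, dotProduct_neg]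
        linarith
      have hMx : (-(Mc + ts • N)) *ᵥ x = 0 := by
        rw [← hps.dotProduct_mulVec_zero_iff x,
          show star x = x from funext fun j => rfl, neg_mulVec, dotProduct_neg, hq0, neg_zero]
      rw [neg_mulVec, neg_eq_zero] at hMx
      have hdet : (Mc + ts • N).det = 0 := Matrix.exists_mulVec_eq_zero_iff.mp ⟨x, hx0, hMx⟩
      refine ⟨fun k => pc k + ts * (p k - pc k), fun k => ?_, by rw [hAt ts]; exact hdet⟩
      obtain ⟨hl, hu⟩ := hbox k
      have hrΔ : 0 ≤ r * Δ k := mul_nonneg hr (hΔ k)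
      constructor
      · show pc k - r * Δ k ≤ pc k + ts * (p k - pc k)
        nlinarith [mul_le_mul_of_nonneg_left (show -(r * Δ k) ≤ p k - pc k by linarith) ht0, mul_nonneg (sub_nonneg.mpr ht1) hrΔ]
      · show pc k + ts * (p k - pc k) ≤ pc k + r * Δ k
        nlinarith [mul_le_mul_of_nonneg_left (show p k - pc k ≤ r * Δ k by linarith) ht0, mul_nonneg (sub_nonneg.mpr ht1) hrΔ]
    · rintro ⟨hr, p, hbox, hdet⟩
      refine ⟨hr, p, hbox, fun hst => ?_⟩
      have h0 : (0 : ℝ) ∈ spectrum ℝ (A0 + ∑ k, p k • A k) := by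
        refine (spectrum.zero_mem_iff (R := ℝ)).mpr fun hu => ?_
        exact ((Matrix.isUnit_iff_isUnit_det _).mp hu).ne_zero hdet
      exact absurd (hst 0 h0) (lt_irrefl 0)
  rw [hsets]
end
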